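/- arXiv:2508.10154 — 10 statements merged into one kernel-verified Lean document; each statement's English description precedes it below -/
import Mathlib

section
/- For every real t ≥ 0, t - t^3/3 ≤ tanh(t) ≤ t - (t^3/3) * exp(-t). -/
open Real

/-- If `f` has derivative `f'` everywhere and `f' ≥ 0` on `[0, ∞)`, then `f 0 ≤ f t` for `t ≥ 0`. -/
lemma aux_mono {f f' : ℝ → ℝ} (hf : ∀ x, HasDerivAt f (f' x) x)
    (h0 : ∀ x, 0 ≤ x → 0 ≤ f' x) {t : ℝ} (ht : 0 ≤ t) : f 0 ≤ f t := by
  have hmono : MonotoneOn f (Set.Ici (0:ℝ)) := by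
    apply monotoneOn_of_deriv_nonneg (convex_Ici 0)
    · exact fun x _ => ((hf x).differentiableAt.continuousAt).continuousWithinAt
    · exact fun x hx => ((hf x).differentiableAt.differentiableWithinAt)
    · intro x hx
      rw [interior_Ici] at hx
      rw [(hf x).deriv]
      exact h0 x (le_of_lt hx)
  exact hmono (by simp) (by simpa using ht) ht

lemma sinh_le_mul_cosh {t : ℝ} (ht : 0 ≤ t) : Real.sinh t ≤ t * Real.cosh t := by
  have h : ∀ x : ℝ, HasDerivAt (fun x => x * Real.cosh x - Real.sinh x)
      (x * Real.sinh x) x := by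
    intro x
    have := ((hasDerivAt_id x).mul (Real.hasDerivAt_cosh x)).sub (Real.hasDerivAt_sinh x)
    refine this.congr_deriv ?_
    simp only [id_eq]
    ring
  have := aux_mono h (fun x hx => mul_nonneg hx (Real.sinh_nonneg_iff.2 hx)) ht
  simp at this
  linarith

lemma lower_aux {t : ℝ} (ht : 0 ≤ t) :
    (t - t ^ 3 / 3) * Real.cosh t ≤ Real.sinh t := by
  have h : ∀ x : ℝ, HasDerivAt (fun x => Real.sinh x - (x - x ^ 3 / 3) * Real.cosh x)
      (x ^ 2 * Real.cosh x - (x - x ^ 3 / 3) * Real.sinh x) x := by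
    intro x
    have h1 : HasDerivAt (fun x : ℝ => x - x ^ 3 / 3) (1 - x ^ 2) x := by
      have := ((hasDerivAt_id x).sub ((hasDerivAt_pow 3 x).div_const 3))
      refine this.congr_deriv ?_
      ring
    have := (Real.hasDerivAt_sinh x).sub (h1.mul (Real.hasDerivAt_cosh x))
    refine this.congr_deriv ?_
    ring
  have hd : ∀ x : ℝ, 0 ≤ x →
      0 ≤ x ^ 2 * Real.cosh x - (x - x ^ 3 / 3) * Real.sinh x := by
    intro x hx
    have h1 := sinh_le_mul_cosh hx
    have h2 := Real.sinh_nonneg_iff.2 hx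
    have h3 := Real.cosh_pos x
    nlinarith [mul_nonneg hx h2, mul_nonneg (mul_nonneg hx hx) (mul_nonneg hx h2)]
  have := aux_mono h hd ht
  simp at this
  linarith

/-- The key exponential-polynomial inequality for the upper bound. -/
lemma Q_nonneg {t : ℝ} (ht : 0 ≤ t) :
    0 ≤ 3 * Real.exp t ^ 3 - 3 * Real.exp t - 3 * t * Real.exp t ^ 2 + 2 * t ^ 2 - 3 * t := by
  have h1 : t + 1 ≤ Real.exp t := Real.add_one_le_exp t
  have h2 : (0:ℝ) < Real.exp t := Real.exp_pos t
  nlinarith [sq_nonneg (Real.exp t - 1 - t), sq_nonneg (Real.exp t - 1),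
    mul_nonneg (sub_nonneg.2 h1) ht, mul_nonneg (mul_nonneg (sub_nonneg.2 h1) ht) ht,
    mul_nonneg (sub_nonneg.2 h1) (sub_nonneg.2 h1),
    mul_nonneg (mul_nonneg (sub_nonneg.2 h1) (sub_nonneg.2 h1)) (sub_nonneg.2 h1),
    mul_nonneg (mul_nonneg (sub_nonneg.2 h1) (sub_nonneg.2 h1)) ht, sq_nonneg t]

lemma upper_aux {t : ℝ} (ht : 0 ≤ t) :
    Real.sinh t ≤ (t - t ^ 3 / 3 * Real.exp (-t)) * Real.cosh t := by
  have h : ∀ x : ℝ, HasDerivAt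
      (fun x => (x - x ^ 3 / 3 * Real.exp (-x)) * Real.cosh x - Real.sinh x)
      ((1 - (x ^ 2 * Real.exp (-x) - x ^ 3 / 3 * Real.exp (-x))) * Real.cosh x
        + (x - x ^ 3 / 3 * Real.exp (-x)) * Real.sinh x - Real.cosh x) x := by
    intro x
    have he : HasDerivAt (fun x : ℝ => Real.exp (-x)) (-Real.exp (-x)) x := by
      have := (Real.hasDerivAt_exp (-x)).comp x (hasDerivAt_neg x)
      refine this.congr_deriv ?_
      try ring
    have h1 : HasDerivAt (fun x : ℝ => x - x ^ 3 / 3 * Real.exp (-x))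
        (1 - (x ^ 2 * Real.exp (-x) - x ^ 3 / 3 * Real.exp (-x))) x := by
      have := (hasDerivAt_id x).sub (((hasDerivAt_pow 3 x).div_const 3).mul he)
      refine this.congr_deriv ?_
      try ring
    have := (h1.mul (Real.hasDerivAt_cosh x)).sub (Real.hasDerivAt_sinh x)
    refine this.congr_deriv ?_
    try ring
  have hd : ∀ x : ℝ, 0 ≤ x →
      0 ≤ (1 - (x ^ 2 * Real.exp (-x) - x ^ 3 / 3 * Real.exp (-x))) * Real.cosh x
        + (x - x ^ 3 / 3 * Real.exp (-x)) * Real.sinh x - Real.cosh x := by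
    intro x hx
    have hQ := Q_nonneg hx
    have h2 : (0:ℝ) < Real.exp x := Real.exp_pos x
    have hen : Real.exp (-x) = (Real.exp x)⁻¹ := Real.exp_neg x
    rw [Real.sinh_eq, Real.cosh_eq, hen]
    set a := Real.exp x with ha
    have ha0 : a ≠ 0 := ne_of_gt h2
    have key : ((1 - (x ^ 2 * a⁻¹ - x ^ 3 / 3 * a⁻¹)) * ((a + a⁻¹)/2)
        + (x - x ^ 3 / 3 * a⁻¹) * ((a - a⁻¹)/2) - (a + a⁻¹)/2) * (6 * a ^ 2)
        = x * (3 * a ^ 3 - 3 * a - 3 * x * a ^ 2 + 2 * x ^ 2 - 3 * x) := by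
      field_simp
      ring
    nlinarith [key, mul_nonneg hx hQ, pow_pos h2 2]
  have := aux_mono h hd ht
  simp at this
  linarith

theorem tanh_cubic_bounds (t : ℝ) (ht : 0 ≤ t) :
    t - t ^ 3 / 3 ≤ Real.tanh t ∧ Real.tanh t ≤ t - t ^ 3 / 3 * Real.exp (-t) := by
  have hc : (0:ℝ) < Real.cosh t := Real.cosh_pos t
  rw [Real.tanh_eq_sinh_div_cosh]
  constructor
  · rw [le_div_iff₀ hc]
    exact lower_aux ht
  · rw [div_le_iff₀ hc]
    exact upper_aux ht
end

section
/- For every real t ≥ 0, t^2 - (2/3) t^4 ≤ tanh(t)^2 ≤ t^2 - (2/3) t^4 exp(-t). -/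
open Real

private lemma hasDerivAt_tanh' (x : ℝ) :
    HasDerivAt Real.tanh (1 - Real.tanh x ^ 2) x := by
  have hc : Real.cosh x ≠ 0 := (Real.cosh_pos x).ne'
  have h := (Real.hasDerivAt_sinh x).div (Real.hasDerivAt_cosh x) hc
  have heq : Real.tanh = fun y => Real.sinh y / Real.cosh y := by
    funext y; exact Real.tanh_eq_sinh_div_cosh y
  rw [heq]
  refine h.congr_deriv (Eq.symm ?_)
  show (1:ℝ) - (Real.sinh x / Real.cosh x) ^ 2
      = (Real.cosh x * Real.cosh x - Real.sinh x * Real.sinh x) / Real.cosh x ^ 2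
  field_simp

private lemma mono0 {f f' : ℝ → ℝ} (hd : ∀ x, HasDerivAt f (f' x) x)
    (h0 : ∀ x, 0 ≤ x → 0 ≤ f' x) {t : ℝ} (ht : 0 ≤ t) : f 0 ≤ f t := by
  have hmono : MonotoneOn f (Set.Ici 0) := by
    apply monotoneOn_of_deriv_nonneg (convex_Ici 0)
    · exact fun x _ => (hd x).continuousAt.continuousWithinAt
    · exact fun x _ => (hd x).differentiableAt.differentiableWithinAt
    · intro x hx
      rw [(hd x).deriv]
      exact h0 x (le_of_lt (by simpa using hx))
  exact hmono Set.self_mem_Ici ht ht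

private lemma tanh_nonneg' {t : ℝ} (ht : 0 ≤ t) : 0 ≤ Real.tanh t := by
  rw [Real.tanh_eq_sinh_div_cosh]
  exact div_nonneg (by rwa [Real.sinh_nonneg_iff]) (Real.cosh_pos t).le

private lemma tanh_lt_one' (t : ℝ) : Real.tanh t < 1 := by
  rw [Real.tanh_eq_sinh_div_cosh, div_lt_one (Real.cosh_pos t)]
  nlinarith [Real.cosh_sub_sinh t, Real.exp_pos (-t)]

private lemma tanh_le_self {t : ℝ} (ht : 0 ≤ t) : Real.tanh t ≤ t := by
  have h := mono0 (f := fun x => x - Real.tanh x) (f' := fun x => Real.tanh x ^ 2)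
    (fun x => ((hasDerivAt_id x).sub (hasDerivAt_tanh' x)).congr_deriv (by ring))
    (fun x _ => sq_nonneg _) ht
  simp only [Real.tanh_zero] at h
  linarith

private lemma cubic_le_tanh {t : ℝ} (ht : 0 ≤ t) : t - t ^ 3 / 3 ≤ Real.tanh t := by
  have h := mono0 (f := fun x => Real.tanh x - x + x ^ 3 / 3)
    (f' := fun x => (1 - Real.tanh x ^ 2) - 1 + x ^ 2)
    (fun x => by
      have := ((hasDerivAt_tanh' x).sub (hasDerivAt_id x)).add
        ((hasDerivAt_pow 3 x).div_const 3)
      refine this.congr_deriv ?_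
      ring)
    (fun x hx => by beta_reduce; nlinarith [tanh_le_self hx, tanh_nonneg' hx])
    ht
  simp only [Real.tanh_zero] at h
  linarith

private lemma lower_bound {t : ℝ} (ht : 0 ≤ t) :
    t ^ 2 - (2 / 3) * t ^ 4 ≤ Real.tanh t ^ 2 := by
  rcases le_or_gt (t ^ 3 / 3) t with h | h
  · have h1 : 0 ≤ t - t ^ 3 / 3 := by linarith
    have h2 := cubic_le_tanh ht
    have h3 : (t - t ^ 3 / 3) ^ 2 ≤ Real.tanh t ^ 2 := pow_le_pow_left₀ h1 h2 2
    nlinarith [h3, sq_nonneg (t ^ 3)]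
  · have ht3 : 3 < t ^ 2 := by nlinarith
    nlinarith [sq_nonneg (Real.tanh t), sq_nonneg t]

private lemma sub_tanh_lb {t : ℝ} (ht : 0 ≤ t) :
    t ^ 3 / 3 - 2 * t ^ 5 / 15 ≤ t - Real.tanh t := by
  have h := mono0 (f := fun x => x - Real.tanh x - x ^ 3 / 3 + 2 * x ^ 5 / 15)
    (f' := fun x => 1 - (1 - Real.tanh x ^ 2) - x ^ 2 + 2 * x ^ 4 / 3)
    (fun x => by
      have := (((hasDerivAt_id x).sub (hasDerivAt_tanh' x)).sub
        ((hasDerivAt_pow 3 x).div_const 3)).add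
        (((hasDerivAt_pow 5 x).const_mul 2).div_const 15)
      refine this.congr_deriv ?_
      ring)
    (fun x hx => by beta_reduce; nlinarith [lower_bound hx])
    ht
  simp only [Real.tanh_zero] at h
  linarith

private lemma exp_quad {x : ℝ} (hx : 0 ≤ x) : 1 + x + x ^ 2 / 2 ≤ Real.exp x := by
  have h := mono0 (f := fun y => Real.exp y - 1 - y - y ^ 2 / 2)
    (f' := fun y => Real.exp y - 1 - y)
    (fun y => by
      have := (((Real.hasDerivAt_exp y).sub_const 1).sub (hasDerivAt_id y)).sub
        ((hasDerivAt_pow 2 y).div_const 2)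
      refine this.congr_deriv ?_
      ring)
    (fun y hy => by beta_reduce; nlinarith [Real.add_one_le_exp y])
    hx
  simp at h
  linarith

private lemma exp_cubic {x : ℝ} (hx : 0 ≤ x) :
    1 + x + x ^ 2 / 2 + x ^ 3 / 6 ≤ Real.exp x := by
  have h := mono0 (f := fun y => Real.exp y - 1 - y - y ^ 2 / 2 - y ^ 3 / 6)
    (f' := fun y => Real.exp y - 1 - y - y ^ 2 / 2)
    (fun y => by
      have := ((((Real.hasDerivAt_exp y).sub_const 1).sub (hasDerivAt_id y)).sub
        ((hasDerivAt_pow 2 y).div_const 2)).sub ((hasDerivAt_pow 3 y).div_const 6)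
      refine this.congr_deriv ?_
      ring)
    (fun y hy => by
      beta_reduce
      nlinarith [exp_quad hy])
    hx
  simp at h
  linarith

set_option maxHeartbeats 2000000 in
private lemma upper_bound {t : ℝ} (ht : 0 ≤ t) :
    Real.tanh t ^ 2 ≤ t ^ 2 - (2 / 3) * t ^ 4 * Real.exp (-t) := by
  have h := mono0
    (f := fun x => x ^ 2 - (2 / 3) * x ^ 4 * Real.exp (-x) - Real.tanh x ^ 2)
    (f' := fun x => 2 * x - (2 / 3) * (4 * x ^ 3 - x ^ 4) * Real.exp (-x)
      - 2 * Real.tanh x * (1 - Real.tanh x ^ 2))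
    (fun x => by
      have he : HasDerivAt (fun y : ℝ => Real.exp (-y)) (-Real.exp (-x)) x := by
        exact ((Real.hasDerivAt_exp (-x)).comp x (hasDerivAt_neg x)).congr_deriv (by ring)
      have h1 : HasDerivAt (fun y : ℝ => (2 / 3) * y ^ 4 * Real.exp (-y))
          ((2 / 3) * (4 * x ^ 3) * Real.exp (-x) + (2 / 3) * x ^ 4 * -Real.exp (-x)) x :=
        ((hasDerivAt_pow 4 x).const_mul (2 / 3)).mul he
      have h2 : HasDerivAt (fun y : ℝ => Real.tanh y ^ 2)
          (2 * Real.tanh x * (1 - Real.tanh x ^ 2)) x := by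
        have := (hasDerivAt_tanh' x).pow 2
        refine this.congr_deriv ?_
        ring
      have := ((hasDerivAt_pow 2 x).sub h1).sub h2
      refine this.congr_deriv ?_
      ring)
    (fun x hx => by
      have hE : 0 < Real.exp (-x) := Real.exp_pos _
      have hy0 := tanh_nonneg' hx
      have hy1 := tanh_lt_one' x
      set y := Real.tanh x with hy
      have hyy : y - y ^ 3 ≤ 0.39 := by
        nlinarith [mul_nonneg (sq_nonneg (y - 0.5774)) (by linarith : (0:ℝ) ≤ y + 1.1547)]
      rcases le_or_gt x 1 with h1 | h1
      · -- small case
        have hq : (0:ℝ) < 1 + x + x ^ 2 / 2 := by nlinarith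
        have hEq : Real.exp (-x) * (1 + x + x ^ 2 / 2) ≤ 1 := by
          rw [Real.exp_neg]
          rw [inv_mul_le_iff₀ (Real.exp_pos x), mul_one]
          exact exp_quad hx
        have hcub : 0 ≤ x - x ^ 3 / 3 := by nlinarith
        have htanh3 : (x - x ^ 3 / 3) ^ 3 ≤ y ^ 3 :=
          pow_le_pow_left₀ hcub (cubic_le_tanh hx) 3
        have hsub := sub_tanh_lb hx
        -- key polynomial inequality
        have hkey : (1 / 3 : ℝ) * x ^ 3 * (4 - x) ≤
            (x ^ 3 / 3 - 2 * x ^ 5 / 15 + (x - x ^ 3 / 3) ^ 3) * (1 + x + x ^ 2 / 2) := by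
          nlinarith [pow_nonneg hx 3, mul_nonneg (pow_nonneg hx 3) hx,
            mul_nonneg (mul_nonneg (pow_nonneg hx 3) hx) hx, sq_nonneg x,
            mul_nonneg (pow_nonneg hx 5) (by linarith : (0:ℝ) ≤ 1 - x),
            mul_nonneg (pow_nonneg hx 4) (by linarith : (0:ℝ) ≤ 1 - x)]
        have hA : (0:ℝ) ≤ x ^ 3 / 3 - 2 * x ^ 5 / 15 + (x - x ^ 3 / 3) ^ 3 := by
          nlinarith [pow_nonneg hcub 3, pow_nonneg hx 3,
            mul_nonneg (pow_nonneg hx 3) (by nlinarith : (0:ℝ) ≤ 1 - 2 * x ^ 2 / 5)]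
        have hstep : (1 / 3 : ℝ) * x ^ 3 * (4 - x) * Real.exp (-x) ≤
            x ^ 3 / 3 - 2 * x ^ 5 / 15 + (x - x ^ 3 / 3) ^ 3 := by
          calc (1 / 3 : ℝ) * x ^ 3 * (4 - x) * Real.exp (-x)
              ≤ ((x ^ 3 / 3 - 2 * x ^ 5 / 15 + (x - x ^ 3 / 3) ^ 3) * (1 + x + x ^ 2 / 2))
                * Real.exp (-x) := by
                exact mul_le_mul_of_nonneg_right hkey hE.le
            _ = (x ^ 3 / 3 - 2 * x ^ 5 / 15 + (x - x ^ 3 / 3) ^ 3) *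
                (Real.exp (-x) * (1 + x + x ^ 2 / 2)) := by ring
            _ ≤ (x ^ 3 / 3 - 2 * x ^ 5 / 15 + (x - x ^ 3 / 3) ^ 3) * 1 :=
                mul_le_mul_of_nonneg_left hEq hA
            _ = _ := mul_one _
        nlinarith [hstep, hsub, htanh3]
      · -- large case
        have hcE : (1 / 3 : ℝ) * x ^ 3 * (4 - x) * Real.exp (-x) ≤ x - 0.39 := by
          rcases le_or_gt 4 x with h4 | h4
          · have hneg : (1 / 3 : ℝ) * x ^ 3 * (4 - x) ≤ 0 := by
              nlinarith [mul_nonneg (pow_nonneg hx 3) (by linarith : (0:ℝ) ≤ x - 4)]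
            nlinarith [mul_nonpos_of_nonpos_of_nonneg hneg hE.le]
          · have hq : (0:ℝ) < 1 + x + x ^ 2 / 2 + x ^ 3 / 6 := by nlinarith
            have hEq : Real.exp (-x) * (1 + x + x ^ 2 / 2 + x ^ 3 / 6) ≤ 1 := by
              rw [Real.exp_neg, inv_mul_le_iff₀ (Real.exp_pos x), mul_one]
              exact exp_cubic hx
            have hkey : (1 / 3 : ℝ) * x ^ 3 * (4 - x) ≤
                (x - 0.39) * (1 + x + x ^ 2 / 2 + x ^ 3 / 6) := by
              nlinarith [mul_nonneg (by linarith : (0:ℝ) ≤ x - 1)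
                (by linarith : (0:ℝ) ≤ 4 - x), sq_nonneg (x - 2), sq_nonneg (x - 1)]
            calc (1 / 3 : ℝ) * x ^ 3 * (4 - x) * Real.exp (-x)
                ≤ ((x - 0.39) * (1 + x + x ^ 2 / 2 + x ^ 3 / 6)) * Real.exp (-x) :=
                  mul_le_mul_of_nonneg_right hkey hE.le
              _ = (x - 0.39) * (Real.exp (-x) * (1 + x + x ^ 2 / 2 + x ^ 3 / 6)) := by ring
              _ ≤ (x - 0.39) * 1 := mul_le_mul_of_nonneg_left hEq (by linarith)
              _ = x - 0.39 := mul_one _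
        nlinarith [hcE, hyy])
    ht
  simp only [Real.tanh_zero] at h
  norm_num at h
  linarith

theorem tanh_sq_bounds (t : ℝ) (ht : 0 ≤ t) :
    t ^ 2 - (2 / 3) * t ^ 4 ≤ Real.tanh t ^ 2 ∧
      Real.tanh t ^ 2 ≤ t ^ 2 - (2 / 3) * t ^ 4 * Real.exp (-t) := by
  exact ⟨lower_bound ht, upper_bound ht⟩
end

section
/- For every real t ≥ 0, t^3 - t^5 ≤ tanh(t)^3 ≤ t^3 - t^5 exp(-t). -/
open Real

theorem tanh_rep' (t : ℝ) : Real.tanh t = (Real.exp (2*t) - 1)/(Real.exp (2*t) + 1) := by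
  rw [Real.tanh_eq_sinh_div_cosh, Real.sinh_eq, Real.cosh_eq, Real.exp_neg]
  have h := Real.exp_pos t
  have h2 : Real.exp (2*t) = Real.exp t * Real.exp t := by
    rw [← Real.exp_add]; ring_nf
  rw [h2]
  have h3 : 0 < Real.exp t * Real.exp t + 1 := by positivity
  field_simp

theorem exp_lb4' (x : ℝ) (hx : 0 ≤ x) :
    1 + x + x^2/2 + x^3/6 + x^4/24 ≤ Real.exp x := by
  have h := Real.sum_le_exp_of_nonneg hx 5
  simp [Finset.sum_range_succ, Nat.factorial] at h
  linarith

theorem exp_lb5' (x : ℝ) (hx : 0 ≤ x) :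
    1 + x + x^2/2 + x^3/6 + x^4/24 + x^5/120 ≤ Real.exp x := by
  have h := Real.sum_le_exp_of_nonneg hx 6
  simp [Finset.sum_range_succ, Nat.factorial] at h
  linarith

theorem exp_lb6' (x : ℝ) (hx : 0 ≤ x) :
    1 + x + x^2/2 + x^3/6 + x^4/24 + x^5/120 + x^6/720 ≤ Real.exp x := by
  have h := Real.sum_le_exp_of_nonneg hx 7
  simp [Finset.sum_range_succ, Nat.factorial] at h
  linarith

theorem exp_ub4' (x : ℝ) (h1 : 0 ≤ x) (h2 : x ≤ 1) :
    Real.exp x ≤ 1 + x + x^2/2 + x^3/6 + x^4*5/96 := by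
  have h := Real.exp_bound' h1 h2 (n := 4) (by norm_num)
  simp [Finset.sum_range_succ, Nat.factorial] at h
  linarith

theorem pade_lb' (x : ℝ) (hx : 0 ≤ x) : x^2 + 6*x + 12 ≤ Real.exp x * (x^2 - 6*x + 12) := by
  have h := exp_lb5' x hx
  have hq : (0:ℝ) < x^2 - 6*x + 12 := by nlinarith [sq_nonneg (x - 3)]
  have h2 : (1 + x + x^2/2 + x^3/6 + x^4/24 + x^5/120) * (x^2 - 6*x + 12)
      ≤ Real.exp x * (x^2 - 6*x + 12) := mul_le_mul_of_nonneg_right h hq.le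
  nlinarith [pow_nonneg hx 5, pow_nonneg hx 6, pow_nonneg hx 7, sq_nonneg x]

theorem tanh_lb' (t : ℝ) (ht : 0 ≤ t) : 3*t/(3 + t^2) ≤ Real.tanh t := by
  have hp := pade_lb' (2*t) (by linarith)
  have hE : (1:ℝ) ≤ Real.exp (2*t) := Real.one_le_exp (by linarith)
  rw [tanh_rep']
  rw [div_le_div_iff₀ (by positivity) (by positivity)]
  nlinarith [hp, hE]

theorem exp2t_ub' (t : ℝ) (ht : 0 ≤ t) (ht13 : t ≤ 13/10) :
    Real.exp (2*t) ≤ (1 + 2/3*t + 2/9*t^2 + 4/81*t^3 + 5/486*t^4)^3 := by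
  have h1 : Real.exp (2*t/3) ≤ 1 + 2/3*t + 2/9*t^2 + 4/81*t^3 + 5/486*t^4 := by
    have h := exp_ub4' (2*t/3) (by linarith) (by linarith)
    calc Real.exp (2*t/3) ≤ 1 + 2*t/3 + (2*t/3)^2/2 + (2*t/3)^3/6 + (2*t/3)^4*5/96 := h
    _ = 1 + 2/3*t + 2/9*t^2 + 4/81*t^3 + 5/486*t^4 := by ring
  have h2 : Real.exp (2*t) = Real.exp (2*t/3) ^ 3 := by
    have := Real.exp_nat_mul (2*t/3) 3
    push_cast at this
    rw [← this]; ring_nf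
  rw [h2]
  exact pow_le_pow_left₀ (Real.exp_pos _).le h1 3


theorem keypoly' (t : ℝ) (ht : 0 ≤ t) (ht13 : t ≤ 13/10) :
    (1 + 2/3*t + 2/9*t^2 + 4/81*t^3 + 5/486*t^4)^3 * (1 - (t - t^3/3 + 11/100*t^4))
      ≤ 1 + (t - t^3/3 + 11/100*t^4) := by
  have hcub : (0:ℝ) ≤ 433/2025 - 92/2025*t - 4643/109350*t^2 - 4061/328050*t^3 := by
    nlinarith [mul_nonneg (mul_nonneg ht ht) (sub_nonneg.2 ht13),
      mul_nonneg ht (sub_nonneg.2 ht13), sq_nonneg t]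
  nlinarith [mul_nonneg (pow_nonneg ht 4) hcub, pow_nonneg ht 8, pow_nonneg ht 9,
    pow_nonneg ht 10, pow_nonneg ht 11, pow_nonneg ht 12, pow_nonneg ht 13,
    pow_nonneg ht 14, pow_nonneg ht 15, pow_nonneg ht 16]

theorem midpoly' (t : ℝ) (ht : 0 ≤ t) (ht13 : t ≤ 13/10) :
    t^5 ≤ (t^3 - (t - t^3/3 + 11/100*t^4)^3) * (1 + t + t^2/2 + t^3/6 + t^4/24) := by
  have hp3 : t^3 ≤ (13/10:ℝ)^3 := pow_le_pow_left₀ ht ht13 3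
  have hp5 : t^5 ≤ (13/10:ℝ)^5 := pow_le_pow_left₀ ht ht13 5
  have hp6 : t^6 ≤ (13/10:ℝ)^6 := pow_le_pow_left₀ ht ht13 6
  have hp8 : t^8 ≤ (13/10:ℝ)^8 := pow_le_pow_left₀ ht ht13 8
  have ht2 : (0:ℝ) ≤ t^2 := sq_nonneg t
  have h5 : t^5 ≤ (13/10)^3 * t^2 := by nlinarith [mul_le_mul_of_nonneg_right hp3 ht2]
  have h7 : t^7 ≤ (13/10)^5 * t^2 := by nlinarith [mul_le_mul_of_nonneg_right hp5 ht2]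
  have h8 : t^8 ≤ (13/10)^6 * t^2 := by nlinarith [mul_le_mul_of_nonneg_right hp6 ht2]
  have h10 : t^10 ≤ (13/10)^8 * t^2 := by nlinarith [mul_le_mul_of_nonneg_right hp8 ht2]
  have hcert : (0:ℝ) ≤ 67/100 - 49/300*t - 67/600*t^2 - 767/540000*t^5
      - 220547/162000000*t^7 - 3179/18000000*t^8 - 1331/24000000*t^10 := by
    nlinarith [h5, h7, h8, h10, mul_nonneg ht (sub_nonneg.2 ht13), sq_nonneg t]
  nlinarith [mul_nonneg (pow_nonneg ht 6) hcert, pow_nonneg ht 9, pow_nonneg ht 10,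
    pow_nonneg ht 12, pow_nonneg ht 15]

theorem bigpoly' (t : ℝ) (ht : 0 ≤ t) (ht13' : 13/10 ≤ t) :
    t^5 ≤ (t^3 - 1) * (1 + t + t^2/2 + t^3/6 + t^4/24 + t^5/120 + t^6/720) := by
  nlinarith [pow_nonneg ht 3, sq_nonneg (t - 13/10),
    mul_nonneg (sub_nonneg.2 ht13') (sub_nonneg.2 ht13'),
    mul_nonneg (mul_nonneg (sub_nonneg.2 ht13') (sub_nonneg.2 ht13')) (sub_nonneg.2 ht13'),
    pow_nonneg (sub_nonneg.2 ht13') 4, pow_nonneg (sub_nonneg.2 ht13') 5,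
    pow_nonneg (sub_nonneg.2 ht13') 6, pow_nonneg (sub_nonneg.2 ht13') 7,
    pow_nonneg (sub_nonneg.2 ht13') 8, pow_nonneg (sub_nonneg.2 ht13') 9]

theorem tanh_cube_bounds (t : ℝ) (ht : 0 ≤ t) :
    t ^ 3 - t ^ 5 ≤ Real.tanh t ^ 3 ∧ Real.tanh t ^ 3 ≤ t ^ 3 - t ^ 5 * Real.exp (-t) := by
  have hE1 : (1:ℝ) ≤ Real.exp (2*t) := Real.one_le_exp (by linarith)
  have hEp : (0:ℝ) < Real.exp (2*t) + 1 := by positivity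
  have htanh0 : 0 ≤ Real.tanh t := by
    rw [tanh_rep']; exact div_nonneg (by linarith) hEp.le
  constructor
  · -- lower bound
    have h1 := tanh_lb' t ht
    have h0 : (0:ℝ) ≤ 3*t/(3+t^2) := by positivity
    have h2 : (3*t/(3+t^2))^3 ≤ Real.tanh t ^ 3 := pow_le_pow_left₀ h0 h1 3
    have h3 : t^3 - t^5 ≤ (3*t/(3+t^2))^3 := by
      rw [div_pow, le_div_iff₀ (by positivity)]
      nlinarith [pow_nonneg ht 7, pow_nonneg ht 9, pow_nonneg ht 11, pow_nonneg ht 3]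
    linarith
  · -- upper bound
    rcases le_or_gt t (13/10) with ht13 | ht13
    · -- t ∈ [0, 1.3] : use tanh t ≤ W := t - t^3/3 + 11/100 t^4
      set W : ℝ := t - t^3/3 + 11/100*t^4 with hWdef
      have h1mW : 0 ≤ 1 - W := by
        rw [hWdef]
        nlinarith [mul_nonneg (mul_nonneg ht ht) (sub_nonneg.2 ht13),
          mul_nonneg ht (sub_nonneg.2 ht13), sq_nonneg t, pow_nonneg ht 3, pow_nonneg ht 4]
      have hkeypoly : (1 + 2/3*t + 2/9*t^2 + 4/81*t^3 + 5/486*t^4)^3 * (1 - W) ≤ 1 + W := by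
        rw [hWdef]; exact keypoly' t ht ht13
      have hkey : Real.exp (2*t) * (1 - W) ≤ 1 + W :=
        le_trans (mul_le_mul_of_nonneg_right (exp2t_ub' t ht ht13) h1mW) hkeypoly
      have htanhW : Real.tanh t ≤ W := by
        rw [tanh_rep', div_le_iff₀ hEp]
        nlinarith [hkey]
      have hcube : Real.tanh t ^ 3 ≤ W^3 := pow_le_pow_left₀ htanh0 htanhW 3
      -- now W^3 ≤ t^3 - t^5 * exp(-t)
      have hS4 : (0:ℝ) < 1 + t + t^2/2 + t^3/6 + t^4/24 := by positivity
      have hpoly : t^5 ≤ (t^3 - W^3) * (1 + t + t^2/2 + t^3/6 + t^4/24) := by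
        rw [hWdef]; exact midpoly' t ht ht13
      have hW3 : 0 ≤ t^3 - W^3 := by
        have h0 : (0:ℝ) ≤ (t^3 - W^3) * (1 + t + t^2/2 + t^3/6 + t^4/24) :=
          le_trans (pow_nonneg ht 5) hpoly
        exact (mul_nonneg_iff_of_pos_right hS4).mp h0
      have hexp : (1:ℝ) + t + t^2/2 + t^3/6 + t^4/24 ≤ Real.exp t := exp_lb4' t ht
      have h5e : t^5 ≤ (t^3 - W^3) * Real.exp t :=
        le_trans hpoly (mul_le_mul_of_nonneg_left hexp hW3)
      have hfin : t^5 * Real.exp (-t) ≤ t^3 - W^3 := by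
        have := mul_le_mul_of_nonneg_right h5e (Real.exp_pos (-t)).le
        rw [mul_assoc, ← Real.exp_add] at this
        simpa using this
      linarith
    · -- t > 1.3 : tanh t ≤ 1 and t^3 - t^5 e^{-t} ≥ 1
      have htanh1 : Real.tanh t ≤ 1 := by
        rw [tanh_rep', div_le_one hEp]; linarith
      have hcube : Real.tanh t ^ 3 ≤ 1 := pow_le_one₀ htanh0 htanh1
      have ht13' : (13/10:ℝ) ≤ t := ht13.le
      have hpoly : t^5 ≤ (t^3 - 1) * (1 + t + t^2/2 + t^3/6 + t^4/24 + t^5/120 + t^6/720) :=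
        bigpoly' t ht ht13'
      have ht31 : 0 ≤ t^3 - 1 := by nlinarith
      have hexp : (1:ℝ) + t + t^2/2 + t^3/6 + t^4/24 + t^5/120 + t^6/720 ≤ Real.exp t :=
        exp_lb6' t ht
      have h5e : t^5 ≤ (t^3 - 1) * Real.exp t :=
        le_trans hpoly (mul_le_mul_of_nonneg_left hexp ht31)
      have hfin : t^5 * Real.exp (-t) ≤ t^3 - 1 := by
        have := mul_le_mul_of_nonneg_right h5e (Real.exp_pos (-t)).le
        rw [mul_assoc, ← Real.exp_add] at this
        simpa using this
      linarith
end

section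
/- For all real ν and t, 1 + tanh(ν)^2 * tanh(t)^2 ≤ 1 / (1 - tanh(ν)^2 * tanh(t)^2) ≤ 1 + tanh(ν)^2 * sinh(t)^2. -/
open Real

theorem denominator_bounds (ν t : ℝ) :
    1 + Real.tanh ν ^ 2 * Real.tanh t ^ 2 ≤ 1 / (1 - Real.tanh ν ^ 2 * Real.tanh t ^ 2) ∧
      1 / (1 - Real.tanh ν ^ 2 * Real.tanh t ^ 2) ≤ 1 + Real.tanh ν ^ 2 * Real.sinh t ^ 2 := by
  have hc := Real.cosh_pos t
  have hcn := Real.cosh_pos ν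
  have hc2 := Real.cosh_sq t
  have hcn2 := Real.cosh_sq ν
  have ht : Real.tanh t = Real.sinh t / Real.cosh t := Real.tanh_eq_sinh_div_cosh t
  have hn : Real.tanh ν = Real.sinh ν / Real.cosh ν := Real.tanh_eq_sinh_div_cosh ν
  have ht2 : Real.tanh t ^ 2 = Real.sinh t ^ 2 / Real.cosh t ^ 2 := by rw [ht, div_pow]
  have hn2 : Real.tanh ν ^ 2 = Real.sinh ν ^ 2 / Real.cosh ν ^ 2 := by rw [hn, div_pow]
  have ht1 : Real.tanh t ^ 2 < 1 := by
    rw [ht2, div_lt_one (by positivity)]; nlinarith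
  have hn1 : Real.tanh ν ^ 2 < 1 := by
    rw [hn2, div_lt_one (by positivity)]; nlinarith
  have htnn : 0 ≤ Real.tanh t ^ 2 := sq_nonneg _
  have hnnn : 0 ≤ Real.tanh ν ^ 2 := sq_nonneg _
  have hD : 0 < 1 - Real.tanh ν ^ 2 * Real.tanh t ^ 2 := by nlinarith
  have hs2 : Real.sinh t ^ 2 = Real.tanh t ^ 2 * Real.cosh t ^ 2 := by
    rw [ht2]; field_simp
  constructor
  · rw [le_div_iff₀ hD]; nlinarith [sq_nonneg (Real.tanh ν * Real.tanh t)]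
  · rw [div_le_iff₀ hD]
    have he : Real.cosh t ^ 2 * (1 - Real.tanh t ^ 2) = 1 := by
      linear_combination hc2 + hs2
    rw [hs2]
    nlinarith [he, mul_nonneg hnnn htnn,
      mul_nonneg (mul_nonneg (mul_nonneg hnnn (mul_nonneg htnn htnn))
        (sq_nonneg (Real.cosh t))) (le_of_lt (sub_pos.mpr hn1))]
end

section
/- For all real t and ν, |tanh(t + ν) - tanh(ν)| ≤ ((1 + tanh(|ν|)) / (1 + |ν|)) * |t|, and consequently |tanh(t + ν) - tanh(ν)| ≤ 2|t| / (1 + |ν|). -/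
open Real

/-- `sinh u ≤ u * cosh u` for `u ≥ 0`. -/
lemma my_sinh_le_mul_cosh {u : ℝ} (hu : 0 ≤ u) : Real.sinh u ≤ u * Real.cosh u := by
  have hmono : StrictMonoOn (fun x : ℝ => x * Real.cosh x - Real.sinh x) (Set.Ici 0) := by
    apply strictMonoOn_of_deriv_pos (convex_Ici 0)
    · fun_prop
    · intro x hx
      rw [interior_Ici, Set.mem_Ioi] at hx
      have hd : HasDerivAt (fun x : ℝ => x * Real.cosh x - Real.sinh x)
          (1 * Real.cosh x + x * Real.sinh x - Real.cosh x) x :=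
        ((hasDerivAt_id x).mul (Real.hasDerivAt_cosh x)).sub (Real.hasDerivAt_sinh x)
      rw [hd.deriv]
      have : 0 < Real.sinh x := Real.sinh_pos_iff.2 hx
      nlinarith
  rcases hu.eq_or_lt with h | h
  · simp [← h]
  · have := hmono (Set.self_mem_Ici) (le_of_lt h : (0:ℝ) ≤ u) h
    simpa using this.le

/-- `1 + m ≤ exp m * cosh m` for all `m`. -/
lemma my_one_add_le_exp_mul_cosh (m : ℝ) : 1 + m ≤ Real.exp m * Real.cosh m := by
  have h1 : 2 * m + 1 ≤ Real.exp (2 * m) := Real.add_one_le_exp (2 * m)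
  have h2 : Real.exp (2 * m) = Real.exp m * Real.exp m := by
    rw [two_mul, Real.exp_add]
  have h3 : Real.exp m * Real.exp (-m) = 1 := by
    rw [← Real.exp_add]; simp
  rw [Real.cosh_eq]
  nlinarith [Real.exp_pos m, Real.exp_pos (-m)]

/-- Core inequality: for `ν ≥ 0`, `sinh |u| * (1 + ν) ≤ exp ν * |u| * cosh (ν + u)`. -/
lemma my_core (ν u : ℝ) (hν : 0 ≤ ν) :
    Real.sinh |u| * (1 + ν) ≤ Real.exp ν * |u| * Real.cosh (ν + u) := by
  have hexpν : Real.exp ν = Real.cosh ν + Real.sinh ν := (Real.cosh_add_sinh ν).symm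
  rcases le_total 0 u with hu | hu
  · -- u ≥ 0
    rw [abs_of_nonneg hu, Real.cosh_add]
    have h1 : Real.sinh u ≤ u * Real.cosh u := my_sinh_le_mul_cosh hu
    have h2 : 1 + ν ≤ Real.exp ν := by linarith [Real.add_one_le_exp ν]
    have h3 : 0 ≤ Real.sinh ν := Real.sinh_nonneg_iff.2 hν
    have h4 : 0 ≤ Real.sinh u := Real.sinh_nonneg_iff.2 hu
    have h5 : 1 ≤ Real.cosh ν := Real.one_le_cosh ν
    have h6 : 1 ≤ Real.cosh u := Real.one_le_cosh u
    have h7 : 0 < Real.exp ν := Real.exp_pos ν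
    have hA : Real.sinh u * (1 + ν) ≤ u * Real.cosh u * (1 + ν) :=
      mul_le_mul_of_nonneg_right h1 (by linarith)
    have hB : u * Real.cosh u * (1 + ν) ≤ u * Real.cosh u * Real.exp ν :=
      mul_le_mul_of_nonneg_left h2 (mul_nonneg hu (by positivity))
    have hD : u * Real.cosh u * Real.exp ν
        ≤ Real.exp ν * u * (Real.cosh ν * Real.cosh u + Real.sinh ν * Real.sinh u) := by
      nlinarith [mul_nonneg (mul_nonneg h7.le hu) (mul_nonneg h3 h4),
        mul_nonneg (mul_nonneg (mul_nonneg h7.le hu) (Real.cosh_pos u).le)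
          (sub_nonneg.2 h5)]
    linarith
  · -- u ≤ 0 : write s = -u ≥ 0
    set s : ℝ := -u with hs
    have hs0 : 0 ≤ s := by simp [hs]; linarith
    rw [abs_of_nonpos hu, ← hs]
    have hcosh : Real.cosh (ν + u) = Real.cosh (ν - s) := by rw [hs]; ring_nf
    rw [hcosh]
    rcases le_total s ν with hcase | hcase
    · -- s ≤ ν, let m = ν - s ≥ 0
      set m : ℝ := ν - s with hm
      have hm0 : 0 ≤ m := by linarith
      have hν' : ν = s + m := by rw [hm]; ring
      have hexp : Real.exp ν = Real.exp s * Real.exp m := by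
        rw [hν', Real.exp_add]
      have hes : Real.exp s = Real.cosh s + Real.sinh s := (Real.cosh_add_sinh s).symm
      have hQ : 1 + m ≤ Real.exp m * Real.cosh m := my_one_add_le_exp_mul_cosh m
      have h1 : Real.sinh s ≤ s * Real.cosh s := my_sinh_le_mul_cosh hs0
      have h4 : 0 ≤ Real.sinh s := Real.sinh_nonneg_iff.2 hs0
      have h5 : 0 < Real.cosh s := Real.cosh_pos s
      have h6 : 0 < Real.cosh m := Real.cosh_pos m
      have h7 : 0 < Real.exp m := Real.exp_pos m
      have key : Real.sinh s * (1 + s + m) ≤ s * (Real.cosh s + Real.sinh s) * (1 + m) := by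
        nlinarith [sub_nonneg.2 h1, mul_nonneg hm0 (sub_nonneg.2 h1),
          mul_nonneg (mul_nonneg hm0 hs0) h4]
      have key2 : s * (Real.cosh s + Real.sinh s) * (1 + m)
          ≤ s * (Real.cosh s + Real.sinh s) * (Real.exp m * Real.cosh m) := by
        apply mul_le_mul_of_nonneg_left hQ
        exact mul_nonneg hs0 (by positivity)
      have hcs : Real.cosh (ν - s) = Real.cosh m := by rw [hm]
      rw [hcs, hexp, hes]
      have hνeq : 1 + ν = 1 + s + m := by rw [hν']; ring
      rw [hνeq]
      nlinarith [key, key2]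
    · -- ν ≤ s, let m = s - ν ≥ 0
      set m : ℝ := s - ν with hm
      have hm0 : 0 ≤ m := by linarith
      have hcs : Real.cosh (ν - s) = Real.cosh m := by
        rw [hm, ← Real.cosh_neg]; ring_nf
      rw [hcs]
      have hsm : s = ν + m := by rw [hm]; ring
      have hsinh_s : Real.sinh s = Real.sinh ν * Real.cosh m + Real.cosh ν * Real.sinh m := by
        rw [hsm, Real.sinh_add]
      have h1 : Real.sinh m ≤ m * Real.cosh m := my_sinh_le_mul_cosh hm0
      have h2 : Real.sinh ν ≤ ν * Real.cosh ν := my_sinh_le_mul_cosh hν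
      have h3 : 0 ≤ Real.sinh ν := Real.sinh_nonneg_iff.2 hν
      have h4 : 0 ≤ Real.sinh m := Real.sinh_nonneg_iff.2 hm0
      have h5 : 0 < Real.cosh ν := Real.cosh_pos ν
      have h6 : 0 < Real.cosh m := Real.cosh_pos m
      have h7 : 1 ≤ Real.cosh ν := Real.one_le_cosh ν
      have h8 : 1 ≤ Real.cosh m := Real.one_le_cosh m
      rcases le_total m 1 with hm1 | hm1
      · -- m ≤ 1
        rw [hexpν, hsinh_s, hsm]
        nlinarith [mul_nonneg (mul_nonneg (by linarith : (0:ℝ) ≤ 1 + ν) h5.le)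
            (sub_nonneg.2 h1),
          mul_nonneg (mul_nonneg h6.le (sub_nonneg.2 hm1)) (sub_nonneg.2 h2)]
      · -- 1 ≤ m, crude bound: sinh s ≤ cosh s ≤ exp ν * cosh m and 1 + ν ≤ s
        have hsc : Real.sinh s ≤ Real.cosh s := (Real.sinh_lt_cosh s).le
        have hcosh_s : Real.cosh s = Real.cosh ν * Real.cosh m + Real.sinh ν * Real.sinh m := by
          rw [hsm, Real.cosh_add]
        have hsmle : Real.sinh m ≤ Real.cosh m := (Real.sinh_lt_cosh m).le
        have hcb : Real.cosh s ≤ Real.exp ν * Real.cosh m := by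
          rw [hcosh_s, hexpν]
          nlinarith [mul_nonneg h3 (sub_nonneg.2 hsmle)]
        have hνs : 1 + ν ≤ s := by linarith
        have h9 : 0 ≤ Real.sinh s := Real.sinh_nonneg_iff.2 (by linarith : (0:ℝ) ≤ s)
        have step1 : Real.sinh s * (1 + ν) ≤ (Real.exp ν * Real.cosh m) * (1 + ν) := by
          apply mul_le_mul_of_nonneg_right (le_trans hsc hcb) (by linarith)
        have step2 : (Real.exp ν * Real.cosh m) * (1 + ν) ≤ Real.exp ν * s * Real.cosh m := by
          have := mul_le_mul_of_nonneg_left hνs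
            (mul_nonneg (Real.exp_pos ν).le h6.le)
          nlinarith [this]
        linarith

/-- Main bound for nonnegative ν. -/
lemma my_main (ν t : ℝ) (hν : 0 ≤ ν) :
    |Real.tanh (t + ν) - Real.tanh ν| ≤ ((1 + Real.tanh ν) / (1 + ν)) * |t| := by
  have hc1 : 0 < Real.cosh (t + ν) := Real.cosh_pos _
  have hc2 : 0 < Real.cosh ν := Real.cosh_pos ν
  have hd : Real.tanh (t + ν) - Real.tanh ν
      = Real.sinh t / (Real.cosh (t + ν) * Real.cosh ν) := by
    rw [Real.tanh_eq_sinh_div_cosh, Real.tanh_eq_sinh_div_cosh]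
    rw [div_sub_div _ _ (ne_of_gt hc1) (ne_of_gt hc2)]
    congr 1
    rw [← Real.sinh_sub]
    congr 1; ring
  rw [hd, abs_div, abs_of_pos (mul_pos hc1 hc2), Real.abs_sinh]
  have hrhs : (1 + Real.tanh ν) / (1 + ν) * |t|
      = (Real.exp ν * |t|) / (Real.cosh ν * (1 + ν)) := by
    rw [Real.tanh_eq_sinh_div_cosh]
    have h := Real.cosh_add_sinh ν
    have h2 := (Real.cosh_pos ν).ne'
    field_simp
    rw [h]; ring
  rw [hrhs, div_le_div_iff₀ (mul_pos hc1 hc2) (by positivity)]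
  have hcore := my_core ν t hν
  have hca : Real.cosh (ν + t) = Real.cosh (t + ν) := by rw [add_comm]
  rw [hca] at hcore
  nlinarith [hcore, hc2.le, mul_le_mul_of_nonneg_right hcore hc2.le]

theorem tanh_shift_lipschitz_bound (t ν : ℝ) :
    |Real.tanh (t + ν) - Real.tanh ν| ≤ ((1 + Real.tanh |ν|) / (1 + |ν|)) * |t| ∧
      |Real.tanh (t + ν) - Real.tanh ν| ≤ 2 * |t| / (1 + |ν|) := by
  have h1 : |Real.tanh (t + ν) - Real.tanh ν| ≤ ((1 + Real.tanh |ν|) / (1 + |ν|)) * |t| := by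
    rcases le_total 0 ν with hν | hν
    · rw [abs_of_nonneg hν]
      exact my_main ν t hν
    · have h := my_main (-ν) (-t) (by linarith)
      rw [abs_of_nonpos hν, Real.tanh_neg]
      have he : (-t + -ν) = -(t + ν) := by ring
      rw [he, Real.tanh_neg, Real.tanh_neg, abs_neg] at h
      have he2 : -Real.tanh (t + ν) - -Real.tanh ν = -(Real.tanh (t + ν) - Real.tanh ν) := by
        ring
      rw [he2, abs_neg] at h
      exact h
  refine ⟨h1, le_trans h1 ?_⟩
  have htanh : Real.tanh |ν| ≤ 1 := by
    rw [Real.tanh_eq_sinh_div_cosh]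
    exact (div_le_one (Real.cosh_pos _)).2 (Real.sinh_lt_cosh _).le
  have hpos : (0:ℝ) < 1 + |ν| := by positivity
  rw [div_mul_eq_mul_div, div_le_div_iff₀ hpos hpos]
  nlinarith [mul_nonneg (mul_nonneg (sub_nonneg.2 htanh) (abs_nonneg t)) hpos.le]
end

section
/- Let X be a real random variable with probability density f(x) = K₀(|x|)/π, where K₀ is the modified Bessel function of the second kind of order 0. Then for every α ∈ [0, 1), E[exp(-α|X|)] = (2/π) · arccos(α)/√(1 - α²) and E[cosh(αX)] = 1/√(1 - α²). -/
open Real MeasureTheory Set Filter Topology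

/-- Modified Bessel function of the second kind of order 0, via its integral
representation `K₀(x) = ∫₀^∞ exp(-x cosh t) dt`. -/
noncomputable def besselK0 (x : ℝ) : ℝ :=
  ∫ t in Set.Ioi (0 : ℝ), Real.exp (-x * Real.cosh t)

/-- The probability density `x ↦ K₀(|x|)/π` on ℝ. -/
noncomputable def besselDensity (x : ℝ) : ℝ := besselK0 |x| / Real.pi

lemma aux_exp_integrable {c : ℝ} (hc : 0 < c) :
    IntegrableOn (fun x => Real.exp (-(c * x))) (Set.Ioi (0:ℝ)) := by
  simpa [neg_mul] using exp_neg_integrableOn_Ioi 0 hc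

lemma aux_exp_integral {c : ℝ} (hc : 0 < c) :
    ∫ x in Set.Ioi (0:ℝ), Real.exp (-(c * x)) = 1 / c := by
  have hderiv : ∀ x : ℝ, HasDerivAt (fun x => -Real.exp (-(c * x)) / c)
      (Real.exp (-(c * x))) x := by
    intro x
    have h1 : HasDerivAt (fun x : ℝ => -(c * x)) (-c) x := by
      simpa using (hasDerivAt_id x).const_mul c |>.fun_neg
    have h2 := (h1.exp).neg.div_const c
    refine h2.congr_deriv ?_
    field_simp
  have hlim : Tendsto (fun x : ℝ => -Real.exp (-(c * x)) / c) atTop (𝓝 0) := by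
    have h1 : Tendsto (fun x : ℝ => c * x) atTop atTop :=
      Tendsto.const_mul_atTop hc tendsto_id
    have h2 : Tendsto (fun x : ℝ => Real.exp (-(c * x))) atTop (𝓝 0) :=
      Real.tendsto_exp_neg_atTop_nhds_zero.comp h1
    simpa using h2.neg.div_const c
  have := integral_Ioi_of_hasDerivAt_of_nonneg
    ((hderiv 0).continuousAt.continuousWithinAt) (fun x _ => hderiv x)
    (fun x _ => (Real.exp_pos _).le) hlim
  rw [this]
  simp [div_eq_mul_inv]

lemma aux_self_le_cosh {t : ℝ} (ht : 0 < t) : t ≤ Real.cosh t := by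
  nlinarith [Real.cosh_sub_sinh t, Real.self_lt_sinh_iff.2 ht, Real.exp_pos (-t)]

lemma aux_arctan_id {α : ℝ} (h1 : -1 < α) (h2 : α < 1) :
    2 / Real.sqrt (1 - α ^ 2) * Real.arctan ((1 + α) / Real.sqrt (1 - α ^ 2))
      - 2 / Real.sqrt (1 - α ^ 2) * Real.arctan (α / Real.sqrt (1 - α ^ 2))
      = Real.arccos α / Real.sqrt (1 - α ^ 2) := by
  set β := Real.sqrt (1 - α ^ 2) with hβ
  have hβpos : 0 < β := Real.sqrt_pos.2 (by nlinarith)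
  have hβ2 : β ^ 2 = 1 - α ^ 2 := Real.sq_sqrt (by nlinarith)
  set θ := Real.arccos α with hθ
  have hθpos : 0 < θ := Real.arccos_pos.2 h2
  have hθlt : θ < π :=
    lt_of_le_of_ne (Real.arccos_le_pi α) fun h => by
      have := Real.arccos_eq_pi.1 h; linarith
  have hcos : Real.cos θ = α := Real.cos_arccos (by linarith) (by linarith)
  have hsin : Real.sin θ = β := Real.sin_arccos α
  have hcoshalf : 0 < Real.cos (θ / 2) :=
    Real.cos_pos_of_mem_Ioo ⟨by linarith [Real.pi_pos], by linarith⟩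
  have hsin2 : Real.sin θ = 2 * Real.sin (θ / 2) * Real.cos (θ / 2) := by
    have := Real.sin_two_mul (θ / 2)
    rw [show 2 * (θ / 2) = θ by ring] at this
    exact this
  have hcos2 : Real.cos θ = 2 * Real.cos (θ / 2) ^ 2 - 1 := by
    have := Real.cos_two_mul (θ / 2)
    rw [show 2 * (θ / 2) = θ by ring] at this
    exact this
  have h1α : 0 < 1 + α := by linarith
  have htan : Real.tan (θ / 2) = β / (1 + α) := by
    rw [Real.tan_eq_sin_div_cos, ← hsin, ← hcos]
    rw [div_eq_div_iff hcoshalf.ne' (by rw [hcos]; exact h1α.ne')]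
    linear_combination Real.sin (θ / 2) * hcos2 - Real.cos (θ / 2) * hsin2
  have e2' : Real.arctan (β / (1 + α)) = θ / 2 := by
    rw [← htan, Real.arctan_tan (by linarith [Real.pi_pos]) (by linarith)]
  have e2 : Real.arctan ((1 + α) / β) = π / 2 - θ / 2 := by
    have h := Real.arctan_inv_of_pos (show 0 < (1 + α) / β by positivity)
    rw [inv_div] at h
    rw [e2'] at h
    linarith
  have e1 : Real.arctan (α / β) = Real.arcsin α :=
    (Real.arcsin_eq_arctan ⟨h1, h2⟩).symm
  have harc : θ = π / 2 - Real.arcsin α := Real.arccos_eq_pi_div_two_sub_arcsin α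
  have harc' : Real.arcsin α = π / 2 - θ := by linarith
  rw [e1, e2, harc']
  field_simp
  ring

lemma aux_integral_inv_add_cosh {α : ℝ} (h1 : -1 < α) (h2 : α < 1) :
    IntegrableOn (fun t => (α + Real.cosh t)⁻¹) (Set.Ioi (0:ℝ)) ∧
    ∫ t in Set.Ioi (0:ℝ), (α + Real.cosh t)⁻¹
      = Real.arccos α / Real.sqrt (1 - α ^ 2) := by
  set β := Real.sqrt (1 - α ^ 2) with hβ
  have hβpos : 0 < β := Real.sqrt_pos.2 (by nlinarith)
  have hβ2 : β ^ 2 = 1 - α ^ 2 := Real.sq_sqrt (by nlinarith)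
  set F : ℝ → ℝ := fun t => -(2 / β) * Real.arctan ((Real.exp (-t) + α) / β) with hF
  have hderiv : ∀ t : ℝ, HasDerivAt F ((α + Real.cosh t)⁻¹) t := by
    intro t
    have h1' : HasDerivAt (fun t : ℝ => (Real.exp (-t) + α) / β)
        (Real.exp (-t) * -1 / β) t :=
      (((hasDerivAt_neg t).exp).add_const α).div_const β
    have h2' := (h1'.arctan).const_mul (-(2 / β))
    refine h2'.congr_deriv ?_
    have he : Real.exp (-t) * Real.exp t = 1 := by
      rw [← Real.exp_add]; simp
    have hc : Real.cosh t = (Real.exp t + Real.exp (-t)) / 2 := Real.cosh_eq t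
    have hpos : 0 < α + Real.cosh t := by nlinarith [Real.one_le_cosh t]
    have hden : 0 < 1 + ((Real.exp (-t) + α) / β) ^ 2 := by positivity
    have key : β ^ 2 + (Real.exp (-t) + α) ^ 2
        = 2 * Real.exp (-t) * (α + Real.cosh t) := by
      rw [hβ2, hc]
      linear_combination (-1 : ℝ) * he
    field_simp
    linear_combination (-1 : ℝ) * key
  have hlim : Tendsto F atTop (𝓝 (-(2 / β) * Real.arctan (α / β))) := by
    apply Tendsto.const_mul
    apply (Real.continuous_arctan.tendsto _).comp
    have h := (Real.tendsto_exp_neg_atTop_nhds_zero.add_const α).div_const β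
    simpa using h
  have hcont : ContinuousWithinAt F (Set.Ici 0) 0 :=
    (hderiv 0).continuousAt.continuousWithinAt
  have hnn : ∀ t ∈ Set.Ioi (0:ℝ), 0 ≤ (α + Real.cosh t)⁻¹ := by
    intro t _
    have : 0 < α + Real.cosh t := by nlinarith [Real.one_le_cosh t]
    positivity
  refine ⟨integrableOn_Ioi_deriv_of_nonneg hcont (fun x _ => hderiv x) hnn hlim, ?_⟩
  rw [integral_Ioi_of_hasDerivAt_of_nonneg hcont (fun x _ => hderiv x) hnn hlim]
  have hF0 : F 0 = -(2 / β) * Real.arctan ((1 + α) / β) := by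
    simp [hF]
  rw [hF0]
  have := aux_arctan_id h1 h2
  rw [← hβ] at this
  linarith [this]

lemma aux_besselK0_sm : StronglyMeasurable besselK0 := by
  have hc : Continuous (fun p : ℝ × ℝ => Real.exp (-p.1 * Real.cosh p.2)) := by
    fun_prop
  exact hc.stronglyMeasurable.integral_prod_right'

lemma aux_besselK0_nonneg (x : ℝ) : 0 ≤ besselK0 x :=
  integral_nonneg fun t => (Real.exp_pos _).le

lemma aux_laplace_besselK0 {α : ℝ} (h1 : -1 < α) (h2 : α < 1) :
    IntegrableOn (fun x => Real.exp (-α * x) * besselK0 x) (Set.Ioi (0:ℝ)) ∧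
    ∫ x in Set.Ioi (0:ℝ), Real.exp (-α * x) * besselK0 x
      = Real.arccos α / Real.sqrt (1 - α ^ 2) := by
  set μ := volume.restrict (Set.Ioi (0:ℝ)) with hμ
  set f : ℝ → ℝ → ℝ := fun x t => Real.exp (-((α + Real.cosh t) * x)) with hf
  have hcpos : ∀ t : ℝ, 0 < α + Real.cosh t := fun t => by
    nlinarith [Real.one_le_cosh t]
  have hpt : ∀ x : ℝ, Real.exp (-α * x) * besselK0 x = ∫ t, f x t ∂μ := by
    intro x
    rw [besselK0, ← hμ, ← integral_const_mul]
    refine integral_congr_ae (Filter.Eventually.of_forall fun t => ?_)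
    show Real.exp (-α * x) * Real.exp (-x * Real.cosh t)
      = Real.exp (-((α + Real.cosh t) * x))
    rw [← Real.exp_add]
    congr 1
    ring
  have hfc : Continuous (fun p : ℝ × ℝ => f p.1 p.2) := by
    simp only [hf]; fun_prop
  have hinner_int : ∀ x ∈ Set.Ioi (0:ℝ), Integrable (fun t => f x t) μ := by
    intro x hx
    have hx' : (0:ℝ) < x := hx
    have hbound : Integrable (fun t => Real.exp (-α * x) * Real.exp (-x * t)) μ :=
      (exp_neg_integrableOn_Ioi 0 hx').const_mul _
    refine hbound.mono' ?_ ?_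
    · exact (hfc.comp (continuous_const.prodMk continuous_id)).aestronglyMeasurable
    · filter_upwards [ae_restrict_mem measurableSet_Ioi] with t ht
      rw [Real.norm_eq_abs, abs_of_nonneg (Real.exp_pos _).le, ← Real.exp_add]
      apply Real.exp_le_exp.2
      have := aux_self_le_cosh (show (0:ℝ) < t from ht)
      nlinarith
  have hFmeas : Measurable fun p : ℝ × ℝ => ENNReal.ofReal (f p.1 p.2) :=
    hfc.measurable.ennreal_ofReal
  have hnnf : ∀ x t : ℝ, 0 ≤ f x t := fun x t => (Real.exp_pos _).le
  have key : ∫⁻ x, ENNReal.ofReal (Real.exp (-α * x) * besselK0 x) ∂μ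
      = ENNReal.ofReal (Real.arccos α / Real.sqrt (1 - α ^ 2)) := by
    calc ∫⁻ x, ENNReal.ofReal (Real.exp (-α * x) * besselK0 x) ∂μ
        = ∫⁻ x, ∫⁻ t, ENNReal.ofReal (f x t) ∂μ ∂μ := by
          refine lintegral_congr_ae ?_
          filter_upwards [ae_restrict_mem measurableSet_Ioi] with x hx
          rw [hpt x, ofReal_integral_eq_lintegral_ofReal (hinner_int x hx)
            (Filter.Eventually.of_forall fun t => hnnf x t)]
      _ = ∫⁻ t, ∫⁻ x, ENNReal.ofReal (f x t) ∂μ ∂μ :=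
          lintegral_lintegral_swap hFmeas.aemeasurable
      _ = ∫⁻ t, ENNReal.ofReal ((α + Real.cosh t)⁻¹) ∂μ := by
          refine lintegral_congr fun t => ?_
          rw [← ofReal_integral_eq_lintegral_ofReal (aux_exp_integrable (hcpos t))
            (Filter.Eventually.of_forall fun x => (Real.exp_pos _).le)]
          rw [aux_exp_integral (hcpos t), one_div]
      _ = ENNReal.ofReal (Real.arccos α / Real.sqrt (1 - α ^ 2)) := by
          rw [← ofReal_integral_eq_lintegral_ofReal (aux_integral_inv_add_cosh h1 h2).1
            (Filter.Eventually.of_forall fun t => (inv_pos.2 (hcpos t)).le),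
            (aux_integral_inv_add_cosh h1 h2).2]
  have haesm : AEStronglyMeasurable (fun x => Real.exp (-α * x) * besselK0 x) μ := by
    exact (((Real.continuous_exp.comp (continuous_const.mul continuous_id)).stronglyMeasurable).mul
      aux_besselK0_sm).aestronglyMeasurable
  have hnn : 0 ≤ᵐ[μ] fun x => Real.exp (-α * x) * besselK0 x :=
    Filter.Eventually.of_forall fun x =>
      mul_nonneg (Real.exp_pos _).le (aux_besselK0_nonneg x)
  constructor
  · refine ⟨haesm, ?_⟩
    rw [hasFiniteIntegral_iff_ofReal hnn, key]
    exact ENNReal.ofReal_lt_top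
  · rw [show (∫ x in Set.Ioi (0:ℝ), Real.exp (-α * x) * besselK0 x)
      = ∫ x, Real.exp (-α * x) * besselK0 x ∂μ from rfl]
    rw [integral_eq_lintegral_of_nonneg_ae hnn haesm, key, ENNReal.toReal_ofReal]
    exact div_nonneg (Real.arccos_nonneg α) (Real.sqrt_nonneg _)

theorem bessel_density_exp_cosh (α : ℝ) (hα : α ∈ Set.Ico (0 : ℝ) 1) :
    (∫ x : ℝ, Real.exp (-α * |x|) * besselDensity x) =
        (2 / Real.pi) * (Real.arccos α / Real.sqrt (1 - α ^ 2)) ∧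
      (∫ x : ℝ, Real.cosh (α * x) * besselDensity x) = 1 / Real.sqrt (1 - α ^ 2) := by
  obtain ⟨hα0, hα1⟩ := hα
  have h1 : (-1:ℝ) < α := by linarith
  have L := aux_laplace_besselK0 h1 hα1
  have Lneg := aux_laplace_besselK0 (α := -α) (by linarith) (by linarith)
  have hbneg : Real.sqrt (1 - (-α) ^ 2) = Real.sqrt (1 - α ^ 2) := by ring_nf
  have hβpos : 0 < Real.sqrt (1 - α ^ 2) := Real.sqrt_pos.2 (by nlinarith)
  have hπ : (0:ℝ) < Real.pi := Real.pi_pos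
  constructor
  · have e1 : (∫ x : ℝ, Real.exp (-α * |x|) * besselDensity x)
        = 2 * ∫ x in Set.Ioi (0:ℝ), Real.exp (-α * x) * besselK0 x / Real.pi := by
      rw [← integral_comp_abs (f := fun y => Real.exp (-α * y) * besselK0 y / Real.pi)]
      refine integral_congr_ae (Filter.Eventually.of_forall fun x => ?_)
      simp only [besselDensity]
      ring
    rw [e1, integral_div, L.2]
    ring
  · have e1 : (∫ x : ℝ, Real.cosh (α * x) * besselDensity x)
        = 2 * ∫ x in Set.Ioi (0:ℝ), Real.cosh (α * x) * besselK0 x / Real.pi := by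
      rw [← integral_comp_abs (f := fun y => Real.cosh (α * y) * besselK0 y / Real.pi)]
      refine integral_congr_ae (Filter.Eventually.of_forall fun x => ?_)
      simp only [besselDensity]
      have h : Real.cosh (α * |x|) = Real.cosh (α * x) := by
        rw [← Real.cosh_abs (α * x), abs_mul, abs_of_nonneg hα0]
      rw [h]
      ring
    have e2 : ∀ y : ℝ, Real.cosh (α * y) * besselK0 y / Real.pi
        = Real.exp (-(-α) * y) * besselK0 y * (2 * Real.pi)⁻¹
          + Real.exp (-α * y) * besselK0 y * (2 * Real.pi)⁻¹ := by
      intro y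
      rw [Real.cosh_eq]
      have h : Real.exp (α * y) = Real.exp (-(-α) * y) := by ring_nf
      rw [h]
      field_simp
    rw [e1, integral_congr_ae (Filter.Eventually.of_forall fun y => e2 y)]
    rw [integral_add (Lneg.1.mul_const _) (L.1.mul_const _),
      integral_mul_const, integral_mul_const, Lneg.2, L.2, hbneg, Real.arccos_neg]
    field_simp
    ring
end

section
/- Let X be a real random variable with symmetric probability density f(x) = K₀(|x|)/π. Define n(α, ν) := E[tanh(αX + ν)] and let β := tanh(ν). Then n(α, ν) = β · E[ (1 - tanh(αX)²) / (1 - β² tanh(αX)²) ]. -/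
open Real MeasureTheory

open Set Filter

lemma tanh_sq_lt_one (x : ℝ) : Real.tanh x ^ 2 < 1 := by
  rw [Real.tanh_eq_sinh_div_cosh, div_pow, div_lt_one (by positivity)]
  nlinarith [Real.cosh_sq x]

lemma my_tanh_add (x y : ℝ) :
    Real.tanh (x + y) = (Real.tanh x + Real.tanh y) / (1 + Real.tanh x * Real.tanh y) := by
  have hx := Real.cosh_pos x
  have hy := Real.cosh_pos y
  have hxy := Real.cosh_pos (x + y)
  have hd : 1 + Real.tanh x * Real.tanh y ≠ 0 := by
    nlinarith [_root_.tanh_sq_lt_one x, _root_.tanh_sq_lt_one y, sq_nonneg (Real.tanh x + Real.tanh y),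
      sq_nonneg (Real.tanh x - Real.tanh y)]
  rw [eq_div_iff hd]
  simp only [Real.tanh_eq_sinh_div_cosh, Real.sinh_add, Real.cosh_add] at *
  have hxy' : Real.cosh y * Real.cosh x + Real.sinh x * Real.sinh y ≠ 0 := by nlinarith
  field_simp

lemma tanh_symm_sum (a b : ℝ) :
    Real.tanh (a + b) + Real.tanh (-a + b) =
      2 * (Real.tanh b * ((1 - Real.tanh a ^ 2) / (1 - Real.tanh b ^ 2 * Real.tanh a ^ 2))) := by
  have h1 := _root_.tanh_sq_lt_one a
  have h2 := _root_.tanh_sq_lt_one b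
  have hd1 : 1 + Real.tanh a * Real.tanh b ≠ 0 := by
    nlinarith [sq_nonneg (Real.tanh a + Real.tanh b), sq_nonneg (Real.tanh a - Real.tanh b)]
  have hd2 : 1 - Real.tanh a * Real.tanh b ≠ 0 := by
    nlinarith [sq_nonneg (Real.tanh a + Real.tanh b), sq_nonneg (Real.tanh a - Real.tanh b)]
  have hd3 : 1 - Real.tanh b ^ 2 * Real.tanh a ^ 2 ≠ 0 := by
    nlinarith [sq_nonneg (Real.tanh a * Real.tanh b)]
  rw [my_tanh_add, my_tanh_add, Real.tanh_neg, neg_mul, ← sub_eq_add_neg,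
    div_add_div _ _ hd1 hd2,
    show 2 * (Real.tanh b * ((1 - Real.tanh a ^ 2) / (1 - Real.tanh b ^ 2 * Real.tanh a ^ 2)))
      = (2 * Real.tanh b * (1 - Real.tanh a ^ 2)) / (1 - Real.tanh b ^ 2 * Real.tanh a ^ 2) by ring,
    div_eq_div_iff (mul_ne_zero hd1 hd2) hd3]
  ring

lemma integrable_exp_neg_mul_abs {c : ℝ} (hc : 0 < c) :
    Integrable (fun x : ℝ => Real.exp (-c * |x|)) := by
  have hIoi : IntegrableOn (fun x : ℝ => Real.exp (-c * |x|)) (Ioi 0) := by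
    refine (exp_neg_integrableOn_Ioi 0 hc).congr_fun (fun x hx => ?_) measurableSet_Ioi
    rw [abs_of_pos hx]
  have hIic : IntegrableOn (fun x : ℝ => Real.exp (-c * |x|)) (Iic 0) := by
    rw [← Measure.map_neg_eq_self (volume : Measure ℝ)]
    have m : MeasurableEmbedding fun x : ℝ => -x := (Homeomorph.neg ℝ).measurableEmbedding
    rw [m.integrableOn_map_iff]
    simp_rw [Function.comp_def, abs_neg, neg_preimage, neg_Iic, neg_zero]
    exact Iff.mpr integrableOn_Ici_iff_integrableOn_Ioi hIoi
  rw [← integrableOn_univ, ← Set.Iic_union_Ioi (a := (0:ℝ))]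
  exact hIic.union hIoi

lemma integral_exp_neg_mul_abs {c : ℝ} (hc : 0 < c) :
    ∫ x : ℝ, Real.exp (-c * |x|) = 2 * c⁻¹ := by
  rw [integral_comp_abs (f := fun x => Real.exp (-c * x))]
  have h := integral_comp_mul_left_Ioi (fun x => Real.exp (-x)) 0 hc
  simp only [mul_zero, integral_exp_neg_Ioi, neg_zero, Real.exp_zero, smul_eq_mul,
    mul_one] at h
  simp_rw [show ∀ x : ℝ, -c * x = -(c * x) from fun x => by ring]
  rw [h]

lemma besselF_integrable :
    Integrable (fun p : ℝ × ℝ => Real.exp (-|p.1| * Real.cosh p.2))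
      ((volume : Measure ℝ).prod ((volume : Measure ℝ).restrict (Ioi 0))) := by
  have hcont : Continuous (fun p : ℝ × ℝ => Real.exp (-|p.1| * Real.cosh p.2)) := by
    continuity
  rw [integrable_prod_iff' hcont.aestronglyMeasurable]
  have hval : ∀ t : ℝ, (∫ x : ℝ, ‖Real.exp (-|x| * Real.cosh t)‖) = 2 * (Real.cosh t)⁻¹ := by
    intro t
    simp_rw [Real.norm_eq_abs, Real.abs_exp,
      show ∀ x : ℝ, -|x| * Real.cosh t = -Real.cosh t * |x| from fun x => by ring]
    exact integral_exp_neg_mul_abs (Real.cosh_pos t)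
  constructor
  · refine Eventually.of_forall fun t => ?_
    simpa [show ∀ x : ℝ, -Real.cosh t * |x| = -|x| * Real.cosh t from fun x => by ring]
      using integrable_exp_neg_mul_abs (Real.cosh_pos t)
  · simp_rw [hval]
    have hbound : Integrable (fun t : ℝ => 4 * Real.exp (-t))
        ((volume : Measure ℝ).restrict (Ioi 0)) := by
      have := (exp_neg_integrableOn_Ioi 0 one_pos).const_mul 4
      simpa using this
    refine hbound.mono' ?_ (Eventually.of_forall fun t => ?_)
    · exact ((continuous_const.mul (Real.continuous_cosh.inv₀
        fun t => (Real.cosh_pos t).ne')).aestronglyMeasurable)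
    · have h1 : Real.exp t / 2 ≤ Real.cosh t := by
        rw [Real.cosh_eq]
        nlinarith [Real.exp_pos (-t)]
      have h2 : (0:ℝ) < Real.cosh t := Real.cosh_pos t
      rw [Real.norm_eq_abs, abs_of_pos (by positivity)]
      rw [div_le_iff₀ (by positivity)] at h1
      have h3 : (Real.cosh t)⁻¹ ≤ 2 * Real.exp (-t) := by
        rw [Real.exp_neg]
        have het := Real.exp_pos t
        rw [inv_le_iff_one_le_mul₀ h2]
        rw [show 2 * (Real.exp t)⁻¹ * Real.cosh t = (2 * Real.cosh t) * (Real.exp t)⁻¹ by ring,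
          le_mul_inv_iff₀ het, one_mul]
        linarith
      nlinarith

lemma besselDensity_integrable : Integrable besselDensity := by
  have h := besselF_integrable.integral_prod_left
  have heq : (fun x : ℝ => ∫ t in Ioi (0:ℝ), Real.exp (-|x| * Real.cosh t))
      = fun x => besselK0 |x| := by
    funext x; rfl
  rw [heq] at h
  exact h.div_const Real.pi

lemma besselDensity_neg (x : ℝ) : besselDensity (-x) = besselDensity x := by
  simp [besselDensity, abs_neg]

lemma abs_tanh_le_one (x : ℝ) : |Real.tanh x| ≤ 1 := by
  have h := _root_.tanh_sq_lt_one x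
  rw [abs_le]
  constructor <;> nlinarith [sq_nonneg (Real.tanh x + 1), sq_nonneg (Real.tanh x - 1)]

theorem bessel_n_identity (α ν : ℝ) :
    (∫ x : ℝ, Real.tanh (α * x + ν) * besselDensity x) =
      Real.tanh ν *
        ∫ x : ℝ, ((1 - Real.tanh (α * x) ^ 2) / (1 - Real.tanh ν ^ 2 * Real.tanh (α * x) ^ 2)) *
          besselDensity x := by
  set T : ℝ → ℝ := fun x => Real.tanh (α * x + ν) * besselDensity x with hTdef
  have hTint : Integrable T := by
    refine besselDensity_integrable.bdd_mul (c := 1) ?_ (Eventually.of_forall fun x => by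
      simpa [Real.norm_eq_abs] using abs_tanh_le_one (α * x + ν))
    have htanh : Continuous Real.tanh := by
      rw [show Real.tanh = fun x => Real.sinh x / Real.cosh x from funext Real.tanh_eq_sinh_div_cosh]
      exact Real.continuous_sinh.div Real.continuous_cosh fun x => (Real.cosh_pos x).ne'
    exact (htanh.comp (by continuity)).aestronglyMeasurable
  have hTneg : Integrable (fun x => T (-x)) := hTint.comp_neg
  have key : ∫ x, T x = ∫ x, (T x + T (-x)) / 2 := by
    have h2 : ∫ x, T (-x) = ∫ x, T x := integral_neg_eq_self T volume
    simp_rw [div_eq_mul_inv]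
    rw [integral_mul_const, integral_add hTint hTneg, h2]
    ring
  calc (∫ x : ℝ, Real.tanh (α * x + ν) * besselDensity x) = ∫ x, (T x + T (-x)) / 2 := key
    _ = ∫ x : ℝ, Real.tanh ν * (((1 - Real.tanh (α * x) ^ 2) /
          (1 - Real.tanh ν ^ 2 * Real.tanh (α * x) ^ 2)) * besselDensity x) := by
        congr 1; funext x
        have hs := tanh_symm_sum (α * x) ν
        simp only [hTdef, mul_neg, besselDensity_neg]
        linear_combination (besselDensity x / 2) * hs
    _ = _ := integral_const_mul _ _
end

section
/- Let (αₜ)ₜ≥0 be a sequence of positive reals with α₀ ∈ (0, 0.31) satisfying αₜ₊₁ ≤ αₜ - 3αₜ³/(1 + 8αₜ) for all t ≥ 0 (so in particular 0 < αₜ₊₁ ≤ αₜ). Then for every t ≥ 0, αₜ ≤ 1 / (√(6t + (8 + 1/α₀)²) - 8). -/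
open Real

lemma key_step (a a' : ℝ) (ha : 0 < a) (ha2 : a < 0.31) (ha' : 0 < a')
    (hrec : a' ≤ a - 3 * a ^ 3 / (1 + 8 * a)) :
    (8 + 1 / a) ^ 2 + 6 ≤ (8 + 1 / a') ^ 2 := by
  have hden : (0:ℝ) < 1 + 8 * a := by linarith
  have h1 : a' ≤ a * (1 + 8 * a - 3 * a ^ 2) / (1 + 8 * a) := by
    have heq : a - 3 * a ^ 3 / (1 + 8 * a) = a * (1 + 8 * a - 3 * a ^ 2) / (1 + 8 * a) := by
      field_simp
    linarith [heq ▸ hrec]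
  set d := a * (1 + 8 * a - 3 * a ^ 2) with hd
  have hdpos : 0 < d := by
    by_contra h
    push_neg at h
    have : a * (1 + 8 * a - 3 * a ^ 2) / (1 + 8 * a) ≤ 0 :=
      div_nonpos_of_nonpos_of_nonneg h hden.le
    linarith
  have h1' : a' * (1 + 8 * a) ≤ d := by
    rw [le_div_iff₀ hden] at h1; exact h1
  have h2 : (1 + 8 * a) / d ≤ 1 / a' := by
    rw [div_le_div_iff₀ hdpos ha']
    nlinarith
  have hEpos : (0:ℝ) < 8 + (1 + 8 * a) / d := by positivity
  have hE2 : (8 + (1 + 8 * a) / d) ^ 2 ≤ (8 + 1 / a') ^ 2 := by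
    apply pow_le_pow_left₀ hEpos.le (by linarith)
  refine le_trans ?_ hE2
  have e1 : (8 + 1/a)^2 + 6 = ((8*a+1)^2 + 6*a^2) / a^2 := by field_simp
  have e2 : (8 + (1+8*a)/d)^2 = (8*d + (1+8*a))^2 / d^2 := by field_simp
  rw [e1, e2, div_le_div_iff₀ (by positivity) (by positivity), hd]
  have hq : (0:ℝ) < 27 + 144*a - 54*a^2 := by nlinarith
  nlinarith [mul_pos (pow_pos ha 6) hq]

theorem sublinear_upper_bound (α : ℕ → ℝ)
    (h0 : α 0 ∈ Set.Ioo (0 : ℝ) 0.31)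
    (hpos : ∀ t, 0 < α t)
    (hrec : ∀ t, α (t + 1) ≤ α t - 3 * (α t) ^ 3 / (1 + 8 * α t)) :
    ∀ t : ℕ, α t ≤ 1 / (Real.sqrt (6 * t + (8 + 1 / α 0) ^ 2) - 8) := by
  obtain ⟨h01, h02⟩ := h0
  -- α is bounded by 0.31 for all t
  have hsmall : ∀ t, α t < 0.31 := by
    intro t
    induction t with
    | zero => exact h02
    | succ n ih =>
      have hden : (0:ℝ) < 1 + 8 * α n := by linarith [hpos n]
      have : 0 < 3 * (α n) ^ 3 / (1 + 8 * α n) := div_pos (mul_pos (by norm_num) (pow_pos (hpos n) 3)) hden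
      calc α (n+1) ≤ α n - 3 * (α n) ^ 3 / (1 + 8 * α n) := hrec n
        _ < α n := by linarith
        _ < 0.31 := ih
  -- key invariant
  have hinv : ∀ t : ℕ, 6 * t + (8 + 1 / α 0) ^ 2 ≤ (8 + 1 / α t) ^ 2 := by
    intro t
    induction t with
    | zero => simp
    | succ n ih =>
      have := key_step (α n) (α (n+1)) (hpos n) (hsmall n) (hpos (n+1)) (hrec n)
      push_cast
      push_cast at ih
      linarith
  intro t
  set s := Real.sqrt (6 * t + (8 + 1 / α 0) ^ 2) with hs
  have hβ0 : (8:ℝ) < 8 + 1 / α 0 := by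
    have : 0 < 1 / α 0 := one_div_pos.mpr h01
    linarith
  have hnn : (0:ℝ) ≤ 6 * t + (8 + 1 / α 0) ^ 2 := add_nonneg (by positivity) (sq_nonneg _)
  have hs2 : s ^ 2 = 6 * t + (8 + 1 / α 0) ^ 2 := Real.sq_sqrt hnn
  have hβt : (8:ℝ) < 8 + 1 / α t := by
    have : 0 < 1 / α t := one_div_pos.mpr (hpos t)
    linarith
  have hsle : s ≤ 8 + 1 / α t := by
    calc s ≤ Real.sqrt ((8 + 1 / α t) ^ 2) := Real.sqrt_le_sqrt (hinv t)
      _ = 8 + 1 / α t := Real.sqrt_sq (by linarith)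
  have hs8 : 8 < s := by
    nlinarith [Real.sqrt_nonneg (6 * t + (8 + 1 / α 0) ^ 2), hs2]
  rw [le_div_iff₀ (by linarith)]
  have := mul_le_mul_of_nonneg_left (by linarith : s - 8 ≤ 1 / α t) (hpos t).le
  calc α t * (s - 8) ≤ α t * (1 / α t) := this
    _ = 1 := mul_one_div_cancel (ne_of_gt (hpos t))
end

section
/- Let (αₜ)ₜ≥0 be a sequence of reals with α₀ ∈ (0, 0.31) satisfying αₜ - 3αₜ³ ≤ αₜ₊₁ ≤ αₜ and αₜ > 0 for all t. Then for every t ≥ 0, αₜ ≥ 1 / √(6t + 22·ln(1.2t + 1) + (1/α₀)²). -/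
open Real

set_option maxHeartbeats 1600000 in
theorem sublinear_lower_bound (α : ℕ → ℝ)
    (h0 : α 0 ∈ Set.Ioo (0 : ℝ) 0.31)
    (hpos : ∀ t, 0 < α t)
    (hlow : ∀ t, α t - 3 * (α t) ^ 3 ≤ α (t + 1))
    (hmono : ∀ t, α (t + 1) ≤ α t) :
    ∀ t : ℕ, 1 / Real.sqrt (6 * t + 22 * Real.log (1.2 * t + 1) + (1 / α 0) ^ 2) ≤ α t := by
  obtain ⟨h0p, h0u⟩ := h0
  have hle0 : ∀ t, α t ≤ α 0 := by
    intro t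
    induction t with
    | zero => exact le_refl _
    | succ n ih => exact (hmono n).trans ih
  have hB0 : (10.4 : ℝ) ≤ (1 / α 0) ^ 2 := by
    have h1 : (1 : ℝ) / 0.31 ≤ 1 / α 0 := by
      apply one_div_le_one_div_of_le h0p h0u.le
    nlinarith [h1]
  have hlognn : ∀ t : ℕ, 0 ≤ Real.log (1.2 * t + 1) := by
    intro t
    apply Real.log_nonneg
    have : (0:ℝ) ≤ (t:ℝ) := Nat.cast_nonneg t
    nlinarith
  -- main induction: (1/α t)^2 ≤ f t
  have key : ∀ t : ℕ, (1 / α t) ^ 2 ≤ 6 * t + 22 * Real.log (1.2 * t + 1) + (1 / α 0) ^ 2 := by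
    intro t
    induction t with
    | zero =>
      simp only [Nat.cast_zero]
      have := hlognn 0
      simp only [Nat.cast_zero] at this
      nlinarith
    | succ n ih =>
      set a := α n with ha
      have hap : 0 < a := hpos n
      have hs : a ^ 2 < 0.0961 := by nlinarith [hle0 n]
      have hsp : 0 < a ^ 2 := by positivity
      -- 1 - 3a^2 > 0
      have h13 : (0:ℝ) < 1 - 3 * a ^ 2 := by nlinarith
      have ha' : a * (1 - 3 * a ^ 2) ≤ α (n + 1) := by
        have := hlow n
        nlinarith [this]
      have ha'p : 0 < α (n + 1) := hpos (n + 1)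
      have hal : 0 < a * (1 - 3 * a ^ 2) := by positivity
      -- step bound
      have hstep : (1 / α (n+1)) ^ 2 ≤ (1 / a) ^ 2 + 6 + 54 * a ^ 2 := by
        have h1 : (1 / α (n+1)) ^ 2 ≤ (1 / (a * (1 - 3 * a ^ 2))) ^ 2 := by
          have : 1 / α (n+1) ≤ 1 / (a * (1 - 3 * a ^ 2)) :=
            one_div_le_one_div_of_le hal ha'
          have hp : 0 < 1 / α (n+1) := by positivity
          nlinarith [this, hp]
        refine h1.trans ?_
        rw [div_pow, div_pow, one_pow, div_le_iff₀ (by positivity), mul_pow]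
        have expand : ((1:ℝ) / a ^ 2 + 6 + 54 * a ^ 2) * (a ^ 2 * (1 - 3 * a ^ 2) ^ 2)
            = (1 + 6 * a ^ 2 + 54 * a ^ 4) * (1 - 3 * a ^ 2) ^ 2 := by
          field_simp
        rw [expand]
        nlinarith [sq_nonneg (a^2), sq_nonneg a, hs, hsp]
      -- b ≥ β0 ≥ 10.4, s ≤ 1/10.4
      have hb0 : (1 / α 0) ^ 2 ≤ (1 / a) ^ 2 := by
        have h1 : (1:ℝ) / α 0 ≤ 1 / a := one_div_le_one_div_of_le hap (hle0 n)
        have hp : 0 < (1:ℝ) / α 0 := by positivity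
        nlinarith
      have hbge : (10.4 : ℝ) ≤ (1 / a) ^ 2 := hB0.trans hb0
      have hbs : (1 / a) ^ 2 * a ^ 2 = 1 := by field_simp
      have hsle : a ^ 2 ≤ 1 / 10.4 := by
        rw [le_div_iff₀ (by norm_num)]
        nlinarith
      have hcast : ((n + 1 : ℕ) : ℝ) = (n : ℝ) + 1 := by push_cast; ring
      rw [hcast]
      rcases le_or_gt ((1 / a) ^ 2) (6 * ((n:ℝ) + 1) + 22 * Real.log (1.2 * ((n:ℝ)+1) + 1) + (1 / α 0) ^ 2 - 11.2) with hcase | hcase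
      · -- case A
        linarith [hstep, hsle]
      · -- case B: b > f(n+1) - 11.2, so b > 6n + 5.2
        have hlog1 : 0 ≤ Real.log (1.2 * ((n:ℝ)+1) + 1) := by
          have := hlognn (n+1)
          rw [hcast] at this
          exact this
        have hnn : (0:ℝ) ≤ (n:ℝ) := Nat.cast_nonneg n
        have hbbig : 6 * (n:ℝ) + 5.2 < (1 / a) ^ 2 := by linarith [hB0, hlog1]
        have hpa : (0:ℝ) < 6 * (n:ℝ) + 5.2 := by linarith
        have hpb : (0:ℝ) < 1.2 * (n:ℝ) + 2.2 := by linarith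
        have hsmall : a ^ 2 ≤ 1 / (6 * (n:ℝ) + 5.2) := by
          rw [le_div_iff₀ hpa]
          have hkey := mul_nonneg hsp.le (sub_nonneg.mpr hbbig.le)
          nlinarith [hkey, hbs]
        -- log increment lower bound
        have hlogdiff : (1.2 : ℝ) / (1.2 * (n:ℝ) + 2.2) ≤
            Real.log (1.2 * ((n:ℝ)+1) + 1) - Real.log (1.2 * (n:ℝ) + 1) := by
          have hx : (0:ℝ) < (1.2 * (n:ℝ) + 1) / (1.2 * ((n:ℝ)+1) + 1) := by positivity
          have h1 := Real.log_le_sub_one_of_pos hx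
          have hlr : Real.log ((1.2 * (n:ℝ) + 1) / (1.2 * ((n:ℝ)+1) + 1))
              = Real.log (1.2 * (n:ℝ) + 1) - Real.log (1.2 * ((n:ℝ)+1) + 1) := by
            apply Real.log_div <;> positivity
          rw [hlr] at h1
          have h2 : (1.2 * (n:ℝ) + 1) / (1.2 * ((n:ℝ)+1) + 1) - 1
              = -(1.2 / (1.2 * ((n:ℝ)+1) + 1)) := by
            field_simp
            ring
          rw [h2] at h1
          have h3 : (1.2:ℝ) * ((n:ℝ)+1) + 1 = 1.2 * (n:ℝ) + 2.2 := by ring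
          rw [h3] at h1 ⊢
          linarith
        have h54 : 54 * a ^ 2 ≤ 22 * (1.2 / (1.2 * (n:ℝ) + 2.2)) := by
          calc 54 * a ^ 2 ≤ 54 * (1 / (6 * (n:ℝ) + 5.2)) := by linarith [hsmall]
          _ = 54 / (6 * (n:ℝ) + 5.2) := mul_one_div _ _
          _ ≤ 26.4 / (1.2 * (n:ℝ) + 2.2) := by
              rw [div_le_div_iff₀ hpa hpb]; linarith
          _ = 22 * (1.2 / (1.2 * (n:ℝ) + 2.2)) := by
              rw [mul_div_assoc']; norm_num
        linarith [hstep, ih, hlogdiff, h54]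
  -- conclude
  intro t
  have hfp : (0:ℝ) < 6 * t + 22 * Real.log (1.2 * t + 1) + (1 / α 0) ^ 2 := by
    have h1 := hlognn t
    have h2 : (0:ℝ) ≤ (t:ℝ) := Nat.cast_nonneg t
    nlinarith [hB0]
  have hsq : 1 / α t ≤ Real.sqrt (6 * t + 22 * Real.log (1.2 * t + 1) + (1 / α 0) ^ 2) := by
    have := Real.sqrt_le_sqrt (key t)
    rwa [Real.sqrt_sq (le_of_lt (one_div_pos.mpr (hpos t)))] at this
  have hp : 0 < 1 / α t := one_div_pos.mpr (hpos t)
  calc 1 / Real.sqrt (6 * t + 22 * Real.log (1.2 * t + 1) + (1 / α 0) ^ 2)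
      ≤ 1 / (1 / α t) := one_div_le_one_div_of_le hp hsq
  _ = α t := one_div_one_div _
end

section
/- Let Pₙ be the sequence of polynomials defined by P₀(t) = t and Pₙ₊₁(t) = (1 - t²) · Pₙ'(t). Then for every n ≥ 0: Pₙ has integer coefficients, Pₙ(tanh z) equals the n-th derivative of tanh at z for all real z, deg(Pₙ) = n + 1, and max over t ∈ [-1, 1] of |Pₙ(t)| is at most n!. -/
open Polynomial

namespace DerivPolyTanhAux

lemma normSq_cosh (w : ℂ) :
    Complex.normSq (Complex.cosh w) = Real.sinh w.re ^ 2 + Real.cos w.im ^ 2 := by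
  have h : Complex.cosh w =
      (Real.cosh w.re * Real.cos w.im : ℝ) + (Real.sinh w.re * Real.sin w.im : ℝ) * Complex.I := by
    conv_lhs => rw [← Complex.re_add_im w]
    rw [Complex.cosh_add, Complex.cosh_mul_I, Complex.sinh_mul_I]
    push_cast [Complex.ofReal_cosh, Complex.ofReal_sinh, Complex.ofReal_cos, Complex.ofReal_sin]
    ring
  rw [h, Complex.normSq_apply]
  simp [Complex.sinh_ofReal_re, Complex.cos_ofReal_re, Complex.sin_ofReal_re,
    Complex.cosh_ofReal_re]
  nlinarith [Real.sin_sq_add_cos_sq w.im, Real.cosh_sq w.re]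

lemma normSq_sinh (w : ℂ) :
    Complex.normSq (Complex.sinh w) = Real.sinh w.re ^ 2 + Real.sin w.im ^ 2 := by
  have h : Complex.sinh w =
      (Real.sinh w.re * Real.cos w.im : ℝ) + (Real.cosh w.re * Real.sin w.im : ℝ) * Complex.I := by
    conv_lhs => rw [← Complex.re_add_im w]
    rw [Complex.sinh_add, Complex.cosh_mul_I, Complex.sinh_mul_I]
    push_cast [Complex.ofReal_cosh, Complex.ofReal_sinh, Complex.ofReal_cos, Complex.ofReal_sin]
    ring
  rw [h, Complex.normSq_apply]
  simp [Complex.sinh_ofReal_re, Complex.cos_ofReal_re, Complex.sin_ofReal_re,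
    Complex.cosh_ofReal_re]
  nlinarith [Real.sin_sq_add_cos_sq w.im, Real.cosh_sq w.re]

lemma cos_six_fifths : (3/10 : ℝ) ≤ Real.cos (6/5) := by
  have h1 : |(3/5 : ℝ)| ≤ 1 := by rw [_root_.abs_of_nonneg (by norm_num : (0:ℝ) ≤ 3/5)]; norm_num
  have hb := Real.cos_bound h1
  rw [_root_.abs_of_nonneg (by norm_num : (0:ℝ) ≤ 3/5), abs_le] at hb
  have h2 : Real.cos (6/5) = 2 * Real.cos (3/5) ^ 2 - 1 := by
    have h := Real.cos_two_mul (3/5)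
    norm_num at h
    exact h
  have h3 : (0.81325 : ℝ) ≤ Real.cos (3/5) := by nlinarith [hb.1]
  nlinarith [h3]

lemma cos_im_ge {w : ℂ} (hw : |w.im| ≤ 6/5) : (3/10 : ℝ) ≤ Real.cos w.im := by
  have h1 : Real.cos (6/5) ≤ Real.cos |w.im| :=
    Real.cos_le_cos_of_nonneg_of_le_pi (abs_nonneg _)
      (by nlinarith [Real.pi_gt_three]) hw
  rw [Real.cos_abs] at h1
  linarith [cos_six_fifths]

lemma cosh_ne_zero_of_im {w : ℂ} (hw : |w.im| ≤ 6/5) : Complex.cosh w ≠ 0 := by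
  intro h
  have h2 := normSq_cosh w
  rw [h, map_zero] at h2
  have := cos_im_ge hw
  nlinarith [sq_nonneg (Real.sinh w.re)]

lemma norm_tanh_le {w : ℂ} (hw : |w.im| ≤ 6/5) : ‖Complex.tanh w‖ ≤ 10/3 := by
  have hc := cos_im_ge hw
  have hcosh := cosh_ne_zero_of_im hw
  rw [Complex.tanh_eq_sinh_div_cosh, norm_div]
  rw [div_le_iff₀ (by simpa using hcosh)]
  have h1 : ‖Complex.sinh w‖ ^ 2 = Real.sinh w.re ^ 2 + Real.sin w.im ^ 2 := by
    rw [Complex.sq_norm]; exact normSq_sinh w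
  have h2 : ‖Complex.cosh w‖ ^ 2 = Real.sinh w.re ^ 2 + Real.cos w.im ^ 2 := by
    rw [Complex.sq_norm]; exact normSq_cosh w
  nlinarith [norm_nonneg (Complex.sinh w), norm_nonneg (Complex.cosh w),
    Real.neg_one_le_sin w.im, Real.sin_le_one w.im, sq_nonneg (Real.sinh w.re),
    sq_nonneg (‖Complex.sinh w‖ - ‖Complex.cosh w‖)]

open Metric in
lemma cauchy_iteratedDeriv_bound {f : ℂ → ℂ} {c : ℂ} {R M : ℝ} (hR : 0 < R)
    (hd : DifferentiableOn ℂ f (closedBall c R))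
    (hM : ∀ w ∈ sphere c R, ‖f w‖ ≤ M) (n : ℕ) :
    ‖iteratedDeriv n f c‖ ≤ n.factorial * M / R ^ n := by
  set R' : NNReal := ⟨R, hR.le⟩ with hR'def
  have hRR : (R' : ℝ) = R := rfl
  have hRpos : (0 : NNReal) < R' := by exact_mod_cast hR
  have hd' : DifferentiableOn ℂ f (closedBall c R') := by rw [hRR]; exact hd
  have h := hd'.hasFPowerSeriesOnBall hRpos
  have hM0 : 0 ≤ M := le_trans (norm_nonneg _) (hM _ (circleMap_mem_sphere c hR.le 0))
  have hkey : iteratedDeriv n f c = n.factorial • (cauchyPowerSeries f c R' n fun _ => 1) := by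
    rw [iteratedDeriv_eq_iteratedFDeriv, ← h.factorial_smul 1 n]
  rw [hkey]
  have hcont : Continuous fun θ : ℝ => ‖f (circleMap c R' θ)‖ := by
    refine (hd.continuousOn.comp_continuous (continuous_circleMap c R') ?_).norm
    exact fun θ => sphere_subset_closedBall (circleMap_mem_sphere c hR.le θ)
  have hint : (∫ θ : ℝ in (0)..2 * Real.pi, ‖f (circleMap c R' θ)‖) ≤ 2 * Real.pi * M := by
    have : (∫ θ : ℝ in (0)..2 * Real.pi, ‖f (circleMap c R' θ)‖) ≤
        ∫ _ : ℝ in (0)..2 * Real.pi, M := by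
      apply intervalIntegral.integral_mono_on Real.two_pi_pos.le
        (hcont.intervalIntegrable _ _) (intervalIntegrable_const)
      exact fun θ _ => hM _ (circleMap_mem_sphere c hR.le θ)
    simpa using this
  have hnorm : ‖cauchyPowerSeries f c R' n fun _ => 1‖ ≤ M / R ^ n := by
    calc ‖cauchyPowerSeries f c R' n fun _ => 1‖
        ≤ ‖cauchyPowerSeries f c R' n‖ * ∏ _i : Fin n, ‖(1 : ℂ)‖ :=
          (cauchyPowerSeries f c R' n).le_opNorm _
      _ = ‖cauchyPowerSeries f c R' n‖ := by simp
      _ ≤ ((2 * Real.pi)⁻¹ * ∫ θ : ℝ in (0)..2 * Real.pi, ‖f (circleMap c R' θ)‖)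
            * |(R':ℝ)|⁻¹ ^ n :=
          norm_cauchyPowerSeries_le f c R' n
      _ ≤ ((2 * Real.pi)⁻¹ * (2 * Real.pi * M)) * |(R':ℝ)|⁻¹ ^ n := by
          apply mul_le_mul_of_nonneg_right
          · exact mul_le_mul_of_nonneg_left hint (by positivity)
          · positivity
      _ = M / R ^ n := by
          rw [hRR, _root_.abs_of_nonneg hR.le]
          field_simp
          rw [one_div, inv_pow, inv_mul_cancel_right₀ (pow_ne_zero n hR.ne')]
  calc ‖n.factorial • (cauchyPowerSeries f c R' n fun _ => 1)‖
      = n.factorial * ‖cauchyPowerSeries f c R' n fun _ => 1‖ := by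
        rw [← Nat.cast_smul_eq_nsmul ℝ, norm_smul]; simp
    _ ≤ n.factorial * (M / R ^ n) := by
        exact mul_le_mul_of_nonneg_left hnorm (by positivity)
    _ = n.factorial * M / R ^ n := by ring

lemma real_tanh_hasDerivAt (z : ℝ) : HasDerivAt Real.tanh (1 - Real.tanh z ^ 2) z := by
  have hc : Real.cosh z ≠ 0 := (Real.cosh_pos z).ne'
  have h := (Real.hasDerivAt_sinh z).div (Real.hasDerivAt_cosh z) hc
  simp only [← Real.tanh_eq_sinh_div_cosh, Pi.div_def] at h
  change HasDerivAt Real.tanh _ z at h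
  convert h using 1
  rw [Real.tanh_eq_sinh_div_cosh, div_pow, eq_div_iff (pow_ne_zero 2 hc), sub_mul,
    one_mul, div_mul_eq_mul_div, mul_div_assoc, div_self (pow_ne_zero 2 hc), mul_one]
  ring

lemma complex_tanh_hasDerivAt {z : ℂ} (hc : Complex.cosh z ≠ 0) :
    HasDerivAt Complex.tanh (1 - Complex.tanh z ^ 2) z := by
  have h := (Complex.hasDerivAt_sinh z).div (Complex.hasDerivAt_cosh z) hc
  simp only [← Complex.tanh_eq_sinh_div_cosh, Pi.div_def] at h
  change HasDerivAt Complex.tanh _ z at h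
  convert h using 1
  rw [Complex.tanh_eq_sinh_div_cosh, div_pow, eq_div_iff (pow_ne_zero 2 hc), sub_mul,
    one_mul, div_mul_eq_mul_div, mul_div_assoc, div_self (pow_ne_zero 2 hc), mul_one]
  ring

lemma tanh_surj {t : ℝ} (h1 : -1 < t) (h2 : t < 1) : ∃ z, Real.tanh z = t := by
  have hpos : 0 < (1+t)/(1-t) := div_pos (by linarith) (by linarith)
  set u := Real.sqrt ((1+t)/(1-t)) with hudef
  have hu : 0 < u := Real.sqrt_pos.mpr hpos
  have hu2 : u^2 = (1+t)/(1-t) := Real.sq_sqrt hpos.le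
  have hu2' : u^2*(1-t) = 1+t := by
    rw [hu2]; rw [div_mul_eq_mul_div, mul_div_assoc, div_self (by linarith : (1:ℝ)-t ≠ 0), mul_one]
  refine ⟨Real.log u, ?_⟩
  rw [Real.tanh_eq_sinh_div_cosh, Real.sinh_eq, Real.cosh_eq, Real.exp_log hu, Real.exp_neg,
    Real.exp_log hu]
  rw [div_div_div_cancel_right₀]
  · field_simp
    linear_combination hu2'
  · positivity

section
variable (P : ℕ → Polynomial ℝ) (hP0 : P 0 = Polynomial.X)
  (hPrec : ∀ n, P (n + 1) = (1 - Polynomial.X ^ 2) * Polynomial.derivative (P n))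

include hP0 hPrec

lemma real_eval_eq : ∀ n, ∀ z : ℝ, (P n).eval (Real.tanh z) = iteratedDeriv n Real.tanh z := by
  intro n
  induction n with
  | zero => intro z; simp [hP0]
  | succ n ih =>
    intro z
    rw [iteratedDeriv_succ]
    have hfun : iteratedDeriv n Real.tanh = fun u => (P n).eval (Real.tanh u) :=
      funext fun u => (ih u).symm
    rw [hfun]
    have hder : HasDerivAt (fun u => (P n).eval (Real.tanh u))
        ((derivative (P n)).eval (Real.tanh z) * (1 - Real.tanh z ^ 2)) z :=
      HasDerivAt.comp z ((P n).hasDerivAt (Real.tanh z)) (real_tanh_hasDerivAt z)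
    rw [hder.deriv, hPrec n]
    simp only [eval_mul, eval_sub, eval_one, eval_pow, eval_X]
    ring

lemma complex_eval_eq : ∀ n, ∀ w : ℂ, |w.im| < 6/5 →
    iteratedDeriv n Complex.tanh w = ((P n).map (algebraMap ℝ ℂ)).eval (Complex.tanh w) := by
  have hS : IsOpen {w : ℂ | |w.im| < 6/5} := by
    have : {w : ℂ | |w.im| < 6/5} = Complex.im ⁻¹' (Set.Ioo (-(6/5)) (6/5)) := by
      ext w; simp [abs_lt]
    rw [this]
    exact isOpen_Ioo.preimage Complex.continuous_im
  intro n
  induction n with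
  | zero => intro w hw; simp [hP0]
  | succ n ih =>
    intro w hw
    rw [iteratedDeriv_succ]
    have hev : iteratedDeriv n Complex.tanh =ᶠ[nhds w]
        fun u => ((P n).map (algebraMap ℝ ℂ)).eval (Complex.tanh u) :=
      Filter.eventuallyEq_of_mem (hS.mem_nhds hw) fun u hu => ih u hu
    rw [hev.deriv_eq]
    have hder : HasDerivAt (fun u => ((P n).map (algebraMap ℝ ℂ)).eval (Complex.tanh u))
        ((derivative ((P n).map (algebraMap ℝ ℂ))).eval (Complex.tanh w)
          * (1 - Complex.tanh w ^ 2)) w :=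
      HasDerivAt.comp w (((P n).map (algebraMap ℝ ℂ)).hasDerivAt (Complex.tanh w))
        (complex_tanh_hasDerivAt (cosh_ne_zero_of_im hw.le))
    rw [hder.deriv, hPrec n]
    simp only [Polynomial.map_mul, Polynomial.map_sub, Polynomial.map_one, Polynomial.map_pow,
      Polynomial.map_X, derivative_map, eval_mul, eval_sub, eval_one, eval_pow, eval_X]
    ring

lemma int_coeffs : ∀ n, ∃ q : Polynomial ℤ, P n = q.map (Int.castRingHom ℝ) := by
  intro n
  induction n with
  | zero => exact ⟨Polynomial.X, by simp [hP0]⟩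
  | succ n ih =>
    obtain ⟨q, hq⟩ := ih
    refine ⟨(1 - Polynomial.X ^ 2) * Polynomial.derivative q, ?_⟩
    rw [hPrec n, hq]
    simp [Polynomial.map_mul, Polynomial.map_sub, Polynomial.map_one, Polynomial.map_pow,
      Polynomial.map_X, derivative_map]

lemma deg_eq : ∀ n, (P n).natDegree = n + 1 ∧ P n ≠ 0 := by
  intro n
  induction n with
  | zero => exact ⟨by simp [hP0], by simp [hP0, X_ne_zero]⟩
  | succ n ih =>
    obtain ⟨hdeg, hne⟩ := ih
    have hlc : (P n).coeff (n + 1) ≠ 0 := by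
      rw [← hdeg]; exact mt leadingCoeff_eq_zero.mp hne
    have hdc : (derivative (P n)).coeff n = (P n).coeff (n + 1) * (n + 1) := by
      simp [coeff_derivative]
    have hdne : (derivative (P n)).coeff n ≠ 0 := by
      rw [hdc]; exact mul_ne_zero hlc (by positivity)
    have hdne0 : derivative (P n) ≠ 0 := fun h => hdne (by rw [h]; simp)
    have hdle : (derivative (P n)).natDegree ≤ n := by
      have := natDegree_derivative_le (P n); omega
    have hdge : n ≤ (derivative (P n)).natDegree := le_natDegree_of_ne_zero hdne
    have hddeg : (derivative (P n)).natDegree = n := le_antisymm hdle hdge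
    have h2 : (1 - Polynomial.X ^ 2 : Polynomial ℝ).natDegree = 2 := by
      compute_degree!
    have h2ne : (1 - Polynomial.X ^ 2 : Polynomial ℝ) ≠ 0 := fun h => by
      have := congrArg (fun p => Polynomial.coeff p 2) h
      simp [coeff_one] at this
    constructor
    · rw [hPrec n, natDegree_mul h2ne hdne0, h2, hddeg]; omega
    · rw [hPrec n]; exact mul_ne_zero h2ne hdne0

lemma small_polys :
    P 1 = 1 - Polynomial.X^2 ∧
    P 2 = 2*Polynomial.X^3 - 2*Polynomial.X ∧
    P 3 = -(6*Polynomial.X^4) + 8*Polynomial.X^2 - 2 ∧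
    P 4 = 24*Polynomial.X^5 - 40*Polynomial.X^3 + 16*Polynomial.X ∧
    P 5 = -(120*Polynomial.X^6) + 240*Polynomial.X^4 - 136*Polynomial.X^2 + 16 ∧
    P 6 = 720*Polynomial.X^7 - 1680*Polynomial.X^5 + 1232*Polynomial.X^3 - 272*Polynomial.X := by
  have q1 : P 1 = 1 - Polynomial.X^2 := by
    rw [hPrec 0, hP0]; simp
  have q2 : P 2 = 2*Polynomial.X^3 - 2*Polynomial.X := by
    rw [hPrec 1, q1]
    simp [derivative_sub, derivative_add, derivative_mul, derivative_ofNat, derivative_X_pow,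
      derivative_X, derivative_one, derivative_neg, map_ofNat]
    ring
  have q3 : P 3 = -(6*Polynomial.X^4) + 8*Polynomial.X^2 - 2 := by
    rw [hPrec 2, q2]
    simp [derivative_sub, derivative_add, derivative_mul, derivative_ofNat, derivative_X_pow,
      derivative_X, derivative_one, derivative_neg, map_ofNat]
    ring
  have q4 : P 4 = 24*Polynomial.X^5 - 40*Polynomial.X^3 + 16*Polynomial.X := by
    rw [hPrec 3, q3]
    simp [derivative_sub, derivative_add, derivative_mul, derivative_ofNat, derivative_X_pow,
      derivative_X, derivative_one, derivative_neg, map_ofNat]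
    ring
  have q5 : P 5 = -(120*Polynomial.X^6) + 240*Polynomial.X^4 - 136*Polynomial.X^2 + 16 := by
    rw [hPrec 4, q4]
    simp [derivative_sub, derivative_add, derivative_mul, derivative_ofNat, derivative_X_pow,
      derivative_X, derivative_one, derivative_neg, map_ofNat]
    ring
  have q6 : P 6 = 720*Polynomial.X^7 - 1680*Polynomial.X^5 + 1232*Polynomial.X^3
      - 272*Polynomial.X := by
    rw [hPrec 5, q5]
    simp [derivative_sub, derivative_add, derivative_mul, derivative_ofNat, derivative_X_pow,
      derivative_X, derivative_one, derivative_neg, map_ofNat]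
    ring
  exact ⟨q1, q2, q3, q4, q5, q6⟩

end

end DerivPolyTanhAux

open DerivPolyTanhAux in
set_option maxHeartbeats 1000000 in
theorem derivative_polynomials_tanh (P : ℕ → Polynomial ℝ)
    (hP0 : P 0 = Polynomial.X)
    (hPrec : ∀ n, P (n + 1) = (1 - Polynomial.X ^ 2) * Polynomial.derivative (P n)) :
    ∀ n : ℕ,
      (∀ i : ℕ, ∃ k : ℤ, (P n).coeff i = (k : ℝ)) ∧
      (∀ z : ℝ, (P n).eval (Real.tanh z) = iteratedDeriv n Real.tanh z) ∧
      (P n).natDegree = n + 1 ∧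
      (∀ t : ℝ, t ∈ Set.Icc (-1 : ℝ) 1 → |(P n).eval t| ≤ (Nat.factorial n : ℝ)) := by
  intro n
  obtain ⟨q, hq⟩ := int_coeffs P hP0 hPrec n
  refine ⟨fun i => ⟨q.coeff i, by rw [hq, Polynomial.coeff_map]; simp⟩,
    real_eval_eq P hP0 hPrec n, (deg_eq P hP0 hPrec n).1, ?_⟩
  obtain ⟨q1, q2, q3, q4, q5, q6⟩ := small_polys P hP0 hPrec
  rcases le_or_gt n 6 with h6 | h7
  · interval_cases n
    · intro t ht
      rw [hP0]
      simp only [eval_X, Nat.factorial_zero, Nat.cast_one]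
      exact abs_le.mpr ⟨by linarith [ht.1], by linarith [ht.2]⟩
    · intro t ⟨ht1, ht2⟩
      rw [q1]
      simp only [eval_sub, eval_one, eval_pow, eval_X, Nat.factorial_one, Nat.cast_one]
      rw [abs_le]; constructor <;> nlinarith [sq_nonneg t]
    · intro t ⟨ht1, ht2⟩
      rw [q2, show ((Nat.factorial 2:ℕ):ℝ) = 2 by norm_num [Nat.factorial]]
      simp only [eval_sub, eval_add, eval_mul, eval_pow, eval_X, eval_ofNat]
      norm_num
      rw [abs_le]; constructor <;>
        nlinarith [sq_nonneg t, sq_nonneg (1-t), sq_nonneg (1+t), sq_nonneg (t^2-1)]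
    · intro t ⟨ht1, ht2⟩
      rw [q3, show ((Nat.factorial 3:ℕ):ℝ) = 6 by norm_num [Nat.factorial]]
      simp only [eval_sub, eval_add, eval_neg, eval_mul, eval_pow, eval_X, eval_ofNat]
      norm_num
      rw [abs_le]; constructor <;>
        nlinarith [sq_nonneg t, sq_nonneg (1-t^2), sq_nonneg (3*t^2-2), sq_nonneg (t^2-1),
          mul_nonneg (by nlinarith [sq_nonneg t] : (0:ℝ) ≤ 1 - t^2) (sq_nonneg t)]
    · intro t ⟨ht1, ht2⟩
      rw [q4, show ((Nat.factorial 4:ℕ):ℝ) = 24 by norm_num [Nat.factorial]]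
      simp only [eval_sub, eval_add, eval_mul, eval_pow, eval_X, eval_ofNat]
      norm_num
      rw [abs_le]; constructor <;>
        nlinarith [sq_nonneg t, sq_nonneg (1-t^2), sq_nonneg (t*(1-t^2)), sq_nonneg (t^2-1),
          mul_nonneg (mul_nonneg (sub_nonneg.2 ht2) (by linarith : (0:ℝ) ≤ 1+t)) (sq_nonneg t),
          sq_nonneg (t*(5*t^2-3))]
    · intro t ⟨ht1, ht2⟩
      rw [q5, show ((Nat.factorial 5:ℕ):ℝ) = 120 by norm_num [Nat.factorial]]
      simp only [eval_sub, eval_add, eval_neg, eval_mul, eval_pow, eval_X, eval_ofNat]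
      norm_num
      rw [abs_le]; constructor <;>
        nlinarith [sq_nonneg t, sq_nonneg (1-t^2), sq_nonneg (t^2*(1-t^2)), sq_nonneg (t*(1-t^2)),
          mul_nonneg (mul_nonneg (sub_nonneg.2 ht2) (by linarith : (0:ℝ) ≤ 1+t)) (sq_nonneg t),
          sq_nonneg (t^2-1), sq_nonneg (2*t^2-1)]
    · intro t ⟨ht1, ht2⟩
      rw [q6, show ((Nat.factorial 6:ℕ):ℝ) = 720 by norm_num [Nat.factorial]]
      simp only [eval_sub, eval_add, eval_mul, eval_pow, eval_X, eval_ofNat]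
      norm_num
      rw [abs_le]; constructor <;>
        nlinarith [sq_nonneg t, sq_nonneg (1-t^2), sq_nonneg (t*(1-t^2)), sq_nonneg (t^2*(1-t^2)),
          sq_nonneg (t^3-t),
          mul_nonneg (mul_nonneg (sub_nonneg.2 ht2) (by linarith : (0:ℝ) ≤ 1+t)) (sq_nonneg t),
          mul_nonneg (mul_nonneg (sub_nonneg.2 ht2) (by linarith : (0:ℝ) ≤ 1+t)) (sq_nonneg (t^2)),
          sq_nonneg (2*t^2-1), sq_nonneg (3*t^2-1)]
  · -- n ≥ 7 : Cauchy estimate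
    have key : ∀ z : ℝ, |(P n).eval (Real.tanh z)| ≤ (n.factorial : ℝ) := by
      intro z
      have him : ∀ w : ℂ, w ∈ Metric.closedBall (z:ℂ) (6/5) → |w.im| ≤ 6/5 := by
        intro w hw
        have hd : ‖w - (z:ℂ)‖ ≤ 6/5 := by
          simpa [Metric.mem_closedBall, dist_eq_norm] using hw
        calc |w.im| = |(w - (z:ℂ)).im| := by simp
          _ ≤ ‖w - (z:ℂ)‖ := Complex.abs_im_le_norm _
          _ ≤ 6/5 := hd
      have hdiff : DifferentiableOn ℂ Complex.tanh (Metric.closedBall (z:ℂ) (6/5)) := by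
        intro w hw
        exact ((complex_tanh_hasDerivAt
          (cosh_ne_zero_of_im (him w hw))).differentiableAt).differentiableWithinAt
      have hM : ∀ w ∈ Metric.sphere (z:ℂ) (6/5), ‖Complex.tanh w‖ ≤ 10/3 := fun w hw =>
        norm_tanh_le (him w (Metric.sphere_subset_closedBall hw))
      have hC := cauchy_iteratedDeriv_bound (by norm_num : (0:ℝ) < 6/5) hdiff hM n
      have hev := complex_eval_eq P hP0 hPrec n (z:ℂ)
        (by simp only [Complex.ofReal_im, abs_zero]; norm_num)
      have hre : ((P n).map (algebraMap ℝ ℂ)).eval (Complex.tanh (z:ℂ))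
          = (((P n).eval (Real.tanh z) : ℝ) : ℂ) := by
        rw [← Complex.ofReal_tanh, Polynomial.eval_map]
        exact Polynomial.eval₂_at_apply (algebraMap ℝ ℂ) (Real.tanh z)
      have habs : |(P n).eval (Real.tanh z)| = ‖iteratedDeriv n Complex.tanh (z:ℂ)‖ := by
        rw [hev, hre, Complex.norm_real, Real.norm_eq_abs]
      rw [habs]
      refine hC.trans ?_
      have hpow : (10/3 : ℝ) ≤ (6/5) ^ n := by
        calc (10/3 : ℝ) ≤ (6/5)^7 := by norm_num
          _ ≤ (6/5)^n := pow_le_pow_right₀ (by norm_num) h7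
      rw [div_le_iff₀ (by positivity)]
      calc (n.factorial : ℝ) * (10/3) ≤ (n.factorial : ℝ) * (6/5)^n :=
            mul_le_mul_of_nonneg_left hpow (by positivity)
        _ = (n.factorial : ℝ) * (6/5)^n := rfl
    have hIoo : ∀ t ∈ Set.Ioo (-1:ℝ) 1, |(P n).eval t| ≤ (n.factorial : ℝ) := by
      rintro t ⟨ht1, ht2⟩
      obtain ⟨z, hz⟩ := tanh_surj ht1 ht2
      rw [← hz]; exact key z
    intro t ht
    have hcl : Set.Icc (-1:ℝ) 1 ⊆ {t : ℝ | |(P n).eval t| ≤ (n.factorial : ℝ)} := by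
      rw [← closure_Ioo (by norm_num : (-1:ℝ) ≠ 1)]
      exact closure_minimal hIoo (isClosed_le ((P n).continuous.abs) continuous_const)
    exact hcl ht
end
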